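/- arXiv:2502.00303 — 6 statements merged into one kernel-verified Lean document; each statement's English description precedes it below -/
import Mathlib

section
/- Let Q be a Dirac potential on [0,b] with integrable entries, and let U : [0,b] → M₂ be absolutely continuous with B·U′(x) + Q(x)·U(x) = 0 for almost every x ∈ [0,b] and U(0) = I. Then U(x) is invertible for every x, the map x ↦ U(x)⁻¹ is absolutely continuous, and (U(x)⁻¹)′ = U(x)⁻¹·Bᵀ·Q(x) for almost every x ∈ [0,b]. -/
noncomputable section

open MeasureTheory Set Filter Topology Polynomial intervalIntegral

abbrev M2 : Type := Matrix (Fin 2) (Fin 2) ℂ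

attribute [local instance] Matrix.normedAddCommGroup Matrix.normedSpace

instance M2.instContinuousENorm : ContinuousENorm M2 := SeminormedAddGroup.toContinuousENorm

instance M2.instENormedAddMonoid : ENormedAddMonoid M2 := NormedAddGroup.toENormedAddMonoid

/-- The matrix `B` of the Dirac system. -/
def Bmat : M2 := !![0, 1; -1, 0]

/-- The Dirac potential built from the scalar functions `p, q`. -/
def diracPot (p q : ℝ → ℂ) : ℝ → M2 := fun x => !![p x, q x; q x, -p x]

/-- Operator norm of a `2 × 2` complex matrix, induced by the Euclidean norm on `ℂ²`. -/
def opNorm (A : M2) : ℝ := ‖Matrix.toEuclideanCLM (𝕜 := ℂ) A‖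

/-- The Legendre polynomial of degree `n` (Rodrigues' formula). -/
def legendreP (n : ℕ) : Polynomial ℝ :=
  ((2 ^ n * n.factorial : ℝ)⁻¹) • (fun r => derivative r)^[n] ((X ^ 2 - 1 : Polynomial ℝ) ^ n)

/-- The domain `Ω⁺ = {(x,t) : 0 ≤ x ≤ b, |t| ≤ x}`. -/
def OmegaPlus (b : ℝ) : Set (ℝ × ℝ) := {z | 0 ≤ z.1 ∧ z.1 ≤ b ∧ |z.2| ≤ z.1}

/-- `K` is a transmutation kernel for the potential `Q` on `Ω⁺`: it satisfies the
hyperbolic PDE `B⬝∂ₓK + ∂ₜK⬝B = -Q⬝K` together with the two Goursat conditions. -/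
def IsTransKernel (b : ℝ) (Q : ℝ → M2) (K : ℝ → ℝ → M2) : Prop :=
  (∀ x t : ℝ, (x, t) ∈ OmegaPlus b →
      Bmat * deriv (fun s => K s t) x + deriv (fun s => K x s) t * Bmat = -(Q x * K x t)) ∧
  (∀ x ∈ Set.Icc (0 : ℝ) b, Bmat * K x x - K x x * Bmat = -Q x) ∧
  (∀ x ∈ Set.Icc (0 : ℝ) b, Bmat * K x (-x) + K x (-x) * Bmat = 0)

/-- The `n`-th Fourier–Legendre coefficient `K_n(x)` of the kernel `K`. -/
def Kcoef (K : ℝ → ℝ → M2) (n : ℕ) (x : ℝ) : M2 :=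
  ((2 * (n : ℝ) + 1) / 2) • ∫ t in (-x)..x, ((legendreP n).eval (t / x)) • K x t

/-- The truncated kernel `K^N(x,t) = Σ_{n=0}^{N} (1/x)·K_n(x)·P_n(t/x)`. -/
def KN (K : ℝ → ℝ → M2) (N : ℕ) (x t : ℝ) : M2 :=
  ∑ n ∈ Finset.range (N + 1), (x⁻¹ * (legendreP n).eval (t / x)) • Kcoef K n x

/-- The free solution `U₀(λ,x)`. -/
def U0 (lam : ℂ) (x : ℝ) : M2 :=
  !![Complex.cos (lam * x), -Complex.sin (lam * x);
     Complex.sin (lam * x), Complex.cos (lam * x)]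

/-- `U(λ,x) = U₀(λ,x) + ∫_{-x}^{x} K(x,t)·U₀(λ,t) dt`. -/
def Umat (K : ℝ → ℝ → M2) (lam : ℂ) (x : ℝ) : M2 :=
  U0 lam x + ∫ t in (-x)..x, K x t * U0 lam t

/-- `U^N(λ,x) = U₀(λ,x) + ∫_{-x}^{x} K^N(x,t)·U₀(λ,t) dt`. -/
def UmatN (K : ℝ → ℝ → M2) (N : ℕ) (lam : ℂ) (x : ℝ) : M2 :=
  U0 lam x + ∫ t in (-x)..x, KN K N x t * U0 lam t

/-- `θ_n(x) = xⁿ·K_n(x)` for `n ≥ 0`, and `θ_{-1}(x) = -K₀(x)/x`. -/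
def theta (K : ℝ → ℝ → M2) (n : ℤ) : ℝ → M2 := fun x =>
  if n = -1 then -(x⁻¹ • Kcoef K 0 x) else (x ^ n.toNat : ℝ) • Kcoef K n.toNat x

/-- The integral operator `S[H](x) = U(x)·∫₀ˣ U(t)⁻¹·Bᵀ·H(t) dt`, where `U = U(0,·)`. -/
def Sop (U : ℝ → M2) (H : ℝ → M2) (x : ℝ) : M2 :=
  U x * ∫ t in (0 : ℝ)..x, (U t)⁻¹ * Bmat.transpose * H t


section AuxParts

lemma partsF_bdd {x : ℝ} (hx : 0 ≤ x) {f : ℝ → ℂ} (hf : IntegrableOn f (Set.Ioc 0 x)) :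
    ∀ᵐ s ∂(volume.restrict (Set.Ioc 0 x)),
      ‖∫ u in Set.Ioc 0 s, f u‖ ≤ ∫ u in Set.Ioc 0 x, ‖f u‖ := by
  filter_upwards [ae_restrict_mem measurableSet_Ioc] with s hs
  calc ‖∫ u in Set.Ioc 0 s, f u‖ ≤ ∫ u in Set.Ioc 0 s, ‖f u‖ :=
        norm_integral_le_integral_norm _
    _ ≤ ∫ u in Set.Ioc 0 x, ‖f u‖ := by
        apply setIntegral_mono_set hf.norm
        · exact Eventually.of_forall fun _ => norm_nonneg _
        · exact HasSubset.Subset.eventuallyLE (Set.Ioc_subset_Ioc le_rfl hs.2)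

lemma partsF_meas {x : ℝ} (hx : 0 ≤ x) {f : ℝ → ℂ} (hf : IntegrableOn f (Set.Ioc 0 x)) :
    AEStronglyMeasurable (fun s => ∫ u in Set.Ioc 0 s, f u)
      (volume.restrict (Set.Ioc 0 x)) := by
  have h1 : IntegrableOn f (Set.Icc 0 x) := by
    rwa [integrableOn_Icc_iff_integrableOn_Ioc]
  have h2 := (continuousOn_primitive (a := 0) (b := x) (μ := volume) h1).aestronglyMeasurable
    (μ := volume) measurableSet_Icc
  exact h2.mono_measure (Measure.restrict_mono Set.Ioc_subset_Icc_self le_rfl)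

lemma parts_int_fG {x : ℝ} (hx : 0 ≤ x) {f g : ℝ → ℂ}
    (hf : IntegrableOn f (Set.Ioc 0 x)) (hg : IntegrableOn g (Set.Ioc 0 x)) :
    Integrable (fun t => f t * ∫ s in Set.Ioc 0 t, g s) (volume.restrict (Set.Ioc 0 x)) := by
  have := (Integrable.bdd_mul (c := ∫ u in Set.Ioc 0 x, ‖g u‖) hf
    (partsF_meas hx hg) (partsF_bdd hx hg))
  exact this.congr (Eventually.of_forall fun t => mul_comm _ _)

lemma parts_int_Fg {x : ℝ} (hx : 0 ≤ x) {f g : ℝ → ℂ}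
    (hf : IntegrableOn f (Set.Ioc 0 x)) (hg : IntegrableOn g (Set.Ioc 0 x)) :
    Integrable (fun t => (∫ s in Set.Ioc 0 t, f s) * g t) (volume.restrict (Set.Ioc 0 x)) :=
  Integrable.bdd_mul (c := ∫ u in Set.Ioc 0 x, ‖f u‖) hg (partsF_meas hx hf) (partsF_bdd hx hf)

lemma parts_core {x : ℝ} (hx : 0 ≤ x) {f g : ℝ → ℂ}
    (hf : IntegrableOn f (Set.Ioc 0 x)) (hg : IntegrableOn g (Set.Ioc 0 x)) :
    (∫ t in Set.Ioc 0 x, f t * ∫ s in Set.Ioc 0 t, g s)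
      + (∫ t in Set.Ioc 0 x, (∫ s in Set.Ioc 0 t, f s) * g t)
      = (∫ t in Set.Ioc 0 x, f t) * ∫ t in Set.Ioc 0 x, g t := by
  set μ := volume.restrict (Set.Ioc 0 x) with hμ
  set T : Set (ℝ × ℝ) := {z | z.2 ≤ z.1} with hT
  have hTm : MeasurableSet T := measurableSet_le measurable_snd measurable_fst
  set F : ℝ × ℝ → ℂ := fun z => f z.1 * g z.2 with hF
  have hFi : Integrable F (μ.prod μ) := hf.mul_prod hg
  have hφ : Integrable (Function.uncurry fun t s => T.indicator F (t, s)) (μ.prod μ) := by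
    exact (hFi.indicator hTm).congr (Eventually.of_forall fun z => rfl)
  have swap := MeasureTheory.integral_integral_swap (μ := μ) (ν := μ)
    (f := fun t s => T.indicator F (t, s)) hφ
  have h1 : (∫ t, (∫ s, T.indicator F (t, s) ∂μ) ∂μ)
      = ∫ t in Set.Ioc 0 x, f t * ∫ s in Set.Ioc 0 t, g s := by
    rw [hμ]
    apply setIntegral_congr_fun measurableSet_Ioc
    intro t ht
    show (∫ s, T.indicator F (t, s) ∂μ) = f t * ∫ s in Set.Ioc 0 t, g s
    have : (fun s => T.indicator F (t, s)) = (Set.Iic t).indicator (fun s => f t * g s) := by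
      funext s
      simp only [Set.indicator_apply, hT, Set.mem_setOf_eq, Set.mem_Iic, hF]
    rw [this, MeasureTheory.integral_indicator measurableSet_Iic, hμ,
      Measure.restrict_restrict measurableSet_Iic]
    have hset : Set.Iic t ∩ Set.Ioc 0 x = Set.Ioc 0 t := by
      ext s; simp only [Set.mem_inter_iff, Set.mem_Iic, Set.mem_Ioc]
      exact ⟨fun h => ⟨h.2.1, h.1⟩, fun h => ⟨h.2, h.1, h.2.trans ht.2⟩⟩
    rw [hset, MeasureTheory.integral_const_mul]
  have h2 : (∫ s, (∫ t, T.indicator F (t, s) ∂μ) ∂μ)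
      = ((∫ t in Set.Ioc 0 x, f t) * ∫ t in Set.Ioc 0 x, g t)
        - ∫ t in Set.Ioc 0 x, (∫ s in Set.Ioc 0 t, f s) * g t := by
    have step : ∀ s ∈ Set.Ioc 0 x, (∫ t, T.indicator F (t, s) ∂μ)
        = ((∫ t in Set.Ioc 0 x, f t) - ∫ u in Set.Ioc 0 s, f u) * g s := by
      intro s hs
      have : (fun t => T.indicator F (t, s)) = (Set.Ici s).indicator (fun t => f t * g s) := by
        funext t
        simp only [Set.indicator_apply, hT, Set.mem_setOf_eq, Set.mem_Ici, hF]
      rw [this, MeasureTheory.integral_indicator measurableSet_Ici, hμ,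
        Measure.restrict_restrict measurableSet_Ici]
      have hset : Set.Ici s ∩ Set.Ioc 0 x = Set.Icc s x := by
        ext t; simp only [Set.mem_inter_iff, Set.mem_Ici, Set.mem_Ioc, Set.mem_Icc]
        exact ⟨fun h => ⟨h.1, h.2.2⟩, fun h => ⟨h.1, hs.1.trans_le h.1, h.2⟩⟩
      rw [hset, MeasureTheory.integral_Icc_eq_integral_Ioc, MeasureTheory.integral_mul_const]
      congr 1
      have hsplit : ∫ t in Set.Ioc 0 x, f t
          = (∫ u in Set.Ioc 0 s, f u) + ∫ t in Set.Ioc s x, f t := by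
        rw [← MeasureTheory.setIntegral_union (Set.Ioc_disjoint_Ioc_of_le le_rfl) measurableSet_Ioc
          (hf.mono_set (Set.Ioc_subset_Ioc le_rfl hs.2))
          (hf.mono_set (Set.Ioc_subset_Ioc hs.1.le le_rfl)),
          Set.Ioc_union_Ioc_eq_Ioc hs.1.le hs.2]
      rw [hsplit]; ring
    rw [hμ, setIntegral_congr_fun measurableSet_Ioc step]
    have hi1 : Integrable (fun s => (∫ t in Set.Ioc 0 x, f t) * g s) μ :=
      hg.const_mul _
    have hi2 : Integrable (fun s => (∫ u in Set.Ioc 0 s, f u) * g s) μ :=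
      parts_int_Fg hx hf hg
    have : ∀ s : ℝ, ((∫ t in Set.Ioc 0 x, f t) - ∫ u in Set.Ioc 0 s, f u) * g s
        = (∫ t in Set.Ioc 0 x, f t) * g s - (∫ u in Set.Ioc 0 s, f u) * g s := fun s => by ring
    simp_rw [this]
    rw [MeasureTheory.integral_sub hi1 hi2, MeasureTheory.integral_const_mul]
  rw [h1, h2] at swap
  linear_combination swap

lemma parts {x : ℝ} (hx : 0 ≤ x) (f0 g0 : ℂ) {f g : ℝ → ℂ}
    (hf : IntegrableOn f (Set.Ioc 0 x)) (hg : IntegrableOn g (Set.Ioc 0 x)) :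
    (f0 + ∫ t in Set.Ioc 0 x, f t) * (g0 + ∫ t in Set.Ioc 0 x, g t)
      = f0 * g0 + ∫ t in Set.Ioc 0 x,
          (f t * (g0 + ∫ s in Set.Ioc 0 t, g s) + (f0 + ∫ s in Set.Ioc 0 t, f s) * g t) := by
  have i1 : Integrable (fun t => f t * g0) (volume.restrict (Set.Ioc 0 x)) := hf.mul_const _
  have i2 : Integrable (fun t => f0 * g t) (volume.restrict (Set.Ioc 0 x)) := hg.const_mul _
  have i3 := parts_int_fG hx hf hg
  have i4 := parts_int_Fg hx hf hg
  have key : (∫ t in Set.Ioc 0 x,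
      (f t * (g0 + ∫ s in Set.Ioc 0 t, g s) + (f0 + ∫ s in Set.Ioc 0 t, f s) * g t))
      = ∫ t in Set.Ioc 0 x, ((f t * g0 + f0 * g t)
          + ((f t * ∫ s in Set.Ioc 0 t, g s) + (∫ s in Set.Ioc 0 t, f s) * g t)) := by
    apply MeasureTheory.integral_congr_ae
    apply Eventually.of_forall
    intro t; ring
  have e1 := MeasureTheory.integral_add (i1.add i2) (i3.add i4)
  have e2 := MeasureTheory.integral_add i1 i2
  have e3 := MeasureTheory.integral_add i3 i4
  simp only [Pi.add_apply] at e1 e2 e3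
  rw [key, e1, e2, e3, MeasureTheory.integral_mul_const, MeasureTheory.integral_const_mul,
    parts_core hx hf hg]
  ring

/-- The entry continuous linear map on `M2`. -/
def eCLM (i j : Fin 2) : M2 →L[ℂ] ℂ :=
  LinearMap.toContinuousLinearMap (Matrix.entryLinearMap ℂ ℂ i j)

@[simp] lemma eCLM_apply (i j : Fin 2) (A : M2) : eCLM i j A = A i j := rfl

/-- `A ↦ trace A • 1 - A`, which for `2×2` matrices is the adjugate. -/
def adjCLM : M2 →L[ℂ] M2 :=
  LinearMap.toContinuousLinearMap
    (((Matrix.traceLinearMap (Fin 2) ℂ ℂ).smulRight (1 : M2)) - LinearMap.id)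

lemma adjCLM_apply (A : M2) : adjCLM A = Matrix.trace A • (1 : M2) - A := rfl

lemma adjCLM_eq_adjugate (A : M2) : adjCLM A = Matrix.adjugate A := by
  rw [adjCLM_apply, Matrix.adjugate_fin_two A]
  ext i j
  fin_cases i <;> fin_cases j <;>
    simp [Matrix.trace_fin_two, Matrix.one_apply, Matrix.sub_apply, Matrix.smul_apply,
      smul_eq_mul] <;> ring

lemma adjCLM_one : adjCLM (1 : M2) = 1 := by
  rw [adjCLM_eq_adjugate, Matrix.adjugate_one]

end AuxParts


/-- `U(x)⁻¹` is absolutely continuous and `(U⁻¹)' = U⁻¹·Bᵀ·Q` a.e. -/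
theorem statement3 (b : ℝ) (hb : 0 < b) (p q : ℝ → ℂ)
    (hQ : IntegrableOn (diracPot p q) (Set.Icc 0 b))
    (U U' : ℝ → M2)
    (hU'int : IntegrableOn U' (Set.Icc 0 b))
    (hUrep : ∀ x ∈ Set.Icc 0 b, U x = 1 + ∫ t in (0 : ℝ)..x, U' t)
    (hode : ∀ᵐ x ∂(volume : Measure ℝ), x ∈ Set.Icc 0 b →
      Bmat * U' x + diracPot p q x * U x = 0) :
    (∀ x ∈ Set.Icc 0 b, IsUnit (U x)) ∧
    ∃ W : ℝ → M2, IntegrableOn W (Set.Icc 0 b) ∧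
      (∀ x ∈ Set.Icc 0 b, (U x)⁻¹ = 1 + ∫ t in (0 : ℝ)..x, W t) ∧
      ∀ᵐ x ∂(volume : Measure ℝ), x ∈ Set.Icc 0 b →
        W x = (U x)⁻¹ * Bmat.transpose * diracPot p q x := by
  have hsub : ∀ {y : ℝ}, y ≤ b → Set.Ioc (0:ℝ) y ⊆ Set.Icc 0 b := fun {y} hyb t ht =>
    ⟨ht.1.le, ht.2.trans hyb⟩
  have hBt : Bmat.transpose = !![(0:ℂ), -1; 1, 0] := by
    ext i j
    fin_cases i <;> fin_cases j <;> simp [Bmat, Matrix.transpose_apply]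
  have hBtB : Bmat.transpose * Bmat = 1 := by
    rw [hBt]
    simp [Bmat, Matrix.mul_fin_two, Matrix.one_fin_two]
  have hC : ∀ t : ℝ, Bmat.transpose * diracPot p q t = !![-q t, p t; p t, q t] := by
    intro t
    rw [hBt]
    simp [diracPot, Matrix.mul_fin_two]
  have hU'E : ∀ᵐ t ∂(volume : Measure ℝ), t ∈ Set.Icc 0 b →
      U' t = -(!![-q t, p t; p t, q t] * U t) := by
    filter_upwards [hode] with t h1 ht
    have h3 : Bmat * U' t = -(diracPot p q t * U t) := eq_neg_of_add_eq_zero_left (h1 ht)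
    calc U' t = (Bmat.transpose * Bmat) * U' t := by rw [hBtB, Matrix.one_mul]
      _ = Bmat.transpose * (Bmat * U' t) := by rw [Matrix.mul_assoc]
      _ = Bmat.transpose * -(diracPot p q t * U t) := by rw [h3]
      _ = -((Bmat.transpose * diracPot p q t) * U t) := by
          rw [Matrix.mul_neg, Matrix.mul_assoc]
      _ = -(!![-q t, p t; p t, q t] * U t) := by rw [hC]
  have hU'ii : ∀ {y : ℝ}, 0 ≤ y → y ≤ b → IntervalIntegrable U' volume 0 y := by
    intro y hy0 hyb
    apply IntegrableOn.intervalIntegrable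
    rw [Set.uIcc_of_le hy0]
    exact hU'int.mono_set (Set.Icc_subset_Icc le_rfl hyb)
  have hEint : ∀ (i j : Fin 2) {y : ℝ}, 0 ≤ y → y ≤ b →
      IntegrableOn (fun t => U' t i j) (Set.Ioc 0 y) := by
    intro i j y hy0 hyb
    exact (eCLM i j).integrable_comp (hU'int.mono_set (hsub hyb))
  have hrepE : ∀ (i j : Fin 2) (y : ℝ), 0 ≤ y → y ≤ b →
      U y i j = (1 : M2) i j + ∫ t in Set.Ioc 0 y, U' t i j := by
    intro i j y hy0 hyb
    have h := congrArg (fun A : M2 => A i j) (hUrep y ⟨hy0, hyb⟩)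
    simp only [Matrix.add_apply] at h
    rw [h]
    congr 1
    calc (∫ t in (0:ℝ)..y, U' t) i j = ∫ t in (0:ℝ)..y, U' t i j :=
          ((eCLM i j).intervalIntegral_comp_comm (hU'ii hy0 hyb)).symm
      _ = ∫ t in Set.Ioc 0 y, U' t i j := intervalIntegral.integral_of_le hy0
  have hdet : ∀ y ∈ Set.Icc (0:ℝ) b, (U y).det = 1 := by
    rintro y ⟨hy0, hyb⟩
    have h00 := hEint 0 0 hy0 hyb
    have h01 := hEint 0 1 hy0 hyb
    have h10 := hEint 1 0 hy0 hyb
    have h11 := hEint 1 1 hy0 hyb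
    have P1 := parts hy0 ((1:M2) 0 0) ((1:M2) 1 1) h00 h11
    have P2 := parts hy0 ((1:M2) 0 1) ((1:M2) 1 0) h01 h10
    rw [← hrepE 0 0 y hy0 hyb, ← hrepE 1 1 y hy0 hyb] at P1
    rw [← hrepE 0 1 y hy0 hyb, ← hrepE 1 0 y hy0 hyb] at P2
    have R1 : (∫ t in Set.Ioc 0 y, (U' t 0 0 * ((1:M2) 1 1 + ∫ s in Set.Ioc 0 t, U' s 1 1)
        + ((1:M2) 0 0 + ∫ s in Set.Ioc 0 t, U' s 0 0) * U' t 1 1))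
        = ∫ t in Set.Ioc 0 y, (U' t 0 0 * U t 1 1 + U t 0 0 * U' t 1 1) := by
      apply setIntegral_congr_fun measurableSet_Ioc
      intro t ht
      show U' t 0 0 * ((1:M2) 1 1 + ∫ s in Set.Ioc 0 t, U' s 1 1)
          + ((1:M2) 0 0 + ∫ s in Set.Ioc 0 t, U' s 0 0) * U' t 1 1
          = U' t 0 0 * U t 1 1 + U t 0 0 * U' t 1 1
      rw [← hrepE 1 1 t ht.1.le (ht.2.trans hyb), ← hrepE 0 0 t ht.1.le (ht.2.trans hyb)]
    have R2 : (∫ t in Set.Ioc 0 y, (U' t 0 1 * ((1:M2) 1 0 + ∫ s in Set.Ioc 0 t, U' s 1 0)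
        + ((1:M2) 0 1 + ∫ s in Set.Ioc 0 t, U' s 0 1) * U' t 1 0))
        = ∫ t in Set.Ioc 0 y, (U' t 0 1 * U t 1 0 + U t 0 1 * U' t 1 0) := by
      apply setIntegral_congr_fun measurableSet_Ioc
      intro t ht
      show U' t 0 1 * ((1:M2) 1 0 + ∫ s in Set.Ioc 0 t, U' s 1 0)
          + ((1:M2) 0 1 + ∫ s in Set.Ioc 0 t, U' s 0 1) * U' t 1 0
          = U' t 0 1 * U t 1 0 + U t 0 1 * U' t 1 0
      rw [← hrepE 1 0 t ht.1.le (ht.2.trans hyb), ← hrepE 0 1 t ht.1.le (ht.2.trans hyb)]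
    rw [R1] at P1
    rw [R2] at P2
    have hIcong : (∫ t in Set.Ioc 0 y, (U' t 0 0 * U t 1 1 + U t 0 0 * U' t 1 1))
        = ∫ t in Set.Ioc 0 y, (U' t 0 1 * U t 1 0 + U t 0 1 * U' t 1 0) := by
      apply MeasureTheory.integral_congr_ae
      filter_upwards [ae_restrict_of_ae hU'E, ae_restrict_mem measurableSet_Ioc] with t hE ht
      have hU' := hE (hsub hyb ht)
      rw [hU']
      simp only [Matrix.neg_apply, Matrix.mul_apply, Fin.sum_univ_two,
        Matrix.cons_val', Matrix.cons_val_zero, Matrix.cons_val_one, Matrix.head_cons,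
        Matrix.head_fin_const, Matrix.empty_val', Matrix.cons_val_fin_one, Matrix.of_apply]
      ring
    rw [Matrix.det_fin_two, P1, P2, hIcong]
    simp [Matrix.one_apply]
  constructor
  · intro y hy
    exact (Matrix.isUnit_iff_isUnit_det _).2 (by rw [hdet y hy]; exact isUnit_one)
  have hinv : ∀ y ∈ Set.Icc (0:ℝ) b, (U y)⁻¹ = adjCLM (U y) := by
    intro y hy
    rw [Matrix.inv_def, hdet y hy, Ring.inverse_one, one_smul, adjCLM_eq_adjugate]
  refine ⟨fun t => adjCLM (U' t), adjCLM.integrable_comp hU'int, ?_, ?_⟩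
  · intro x hx
    rw [hinv x hx, hUrep x hx, map_add, adjCLM_one]
    congr 1
    exact (adjCLM.intervalIntegral_comp_comm (hU'ii hx.1 hx.2)).symm
  · filter_upwards [hU'E] with t hE ht
    have hU' := hE ht
    rw [hinv t ht, Matrix.mul_assoc, hC t, adjCLM_apply, adjCLM_apply, hU']
    ext i j
    fin_cases i <;> fin_cases j <;>
      simp only [Matrix.trace_fin_two, Matrix.sub_apply, Matrix.smul_apply, Matrix.one_apply,
        Matrix.neg_apply, Matrix.mul_apply, Fin.sum_univ_two, smul_eq_mul,
        Matrix.cons_val', Matrix.cons_val_zero, Matrix.cons_val_one, Matrix.head_cons,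
        Matrix.head_fin_const, Matrix.empty_val', Matrix.cons_val_fin_one, Matrix.of_apply,
        if_true, if_false] <;>
      norm_num <;> ring

end
end

section
/- Let Q be a Dirac potential on [0,b] with continuously differentiable entries and let K be a continuously differentiable transmutation kernel for Q. Then the matrix function V(x) := I + ∫_{−x}^{x} K(x,t) dt satisfies B·V′(x) + Q(x)·V(x) = 0 for all x ∈ [0,b] and V(0) = I. Equivalently, U(0,x) = I + 2·K₀(x), where K₀(x) = (1/2)·∫_{−x}^{x} K(x,t) dt is the zeroth Fourier–Legendre coefficient of the kernel and U(0,·) denotes the matrix solution of B·Y′ + Q·Y = 0 with value I at 0. -/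
noncomputable section

open MeasureTheory Set Filter Topology Polynomial intervalIntegral

attribute [local instance] Matrix.normedAddCommGroup Matrix.normedSpace

namespace Statement4Aux

/-- Clamp of the first coordinate into `[0, b]`. -/
def clampX (b x : ℝ) : ℝ := max 0 (min b x)

/-- A continuous retraction of the plane onto `Ω⁺`. -/
def clampPt (b : ℝ) (z : ℝ × ℝ) : ℝ × ℝ :=
  (clampX b z.1, max (-(clampX b z.1)) (min (clampX b z.1) z.2))

lemma continuous_clampPt (b : ℝ) : Continuous (clampPt b) := by
  unfold clampPt clampX; fun_prop

lemma clampPt_mem {b : ℝ} (hb : 0 ≤ b) (z : ℝ × ℝ) : clampPt b z ∈ OmegaPlus b := by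
  have h0 : 0 ≤ clampX b z.1 := le_max_left _ _
  show 0 ≤ clampX b z.1 ∧ clampX b z.1 ≤ b ∧
    |max (-(clampX b z.1)) (min (clampX b z.1) z.2)| ≤ clampX b z.1
  refine ⟨h0, max_le hb (min_le_left _ _),
    abs_le.mpr ⟨le_max_left _ _, max_le (by linarith) (min_le_left _ _)⟩⟩

lemma clampPt_eq {b : ℝ} {z : ℝ × ℝ} (hz : z ∈ OmegaPlus b) : clampPt b z = z := by
  obtain ⟨h1, h2, h3⟩ := hz
  rw [abs_le] at h3
  have hx : clampX b z.1 = z.1 := by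
    unfold clampX; rw [min_eq_right h2, max_eq_right h1]
  unfold clampPt
  rw [hx, min_eq_right h3.2, max_eq_right h3.1]

/-- Left multiplication by a fixed matrix, as a continuous `ℝ`-linear map. -/
def mulL (A : M2) : M2 →L[ℝ] M2 := (LinearMap.mulLeft ℝ A).toContinuousLinearMap

/-- Right multiplication by a fixed matrix, as a continuous `ℝ`-linear map. -/
def mulR (A : M2) : M2 →L[ℝ] M2 := (LinearMap.mulRight ℝ A).toContinuousLinearMap

@[simp] lemma mulL_apply (A X : M2) : mulL A X = A * X := rfl
@[simp] lemma mulR_apply (A X : M2) : mulR A X = X * A := rfl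

end Statement4Aux

instance instENormedAddMonoidM2 : ENormedAddMonoid M2 :=
  (inferInstance : @ENormedAddMonoid M2
    (Matrix.normedAddCommGroup : NormedAddCommGroup M2).toUniformSpace.toTopologicalSpace)

instance instContinuousMulM2 : @ContinuousMul M2
    (Matrix.normedAddCommGroup : NormedAddCommGroup M2).toUniformSpace.toTopologicalSpace _ :=
  (inferInstance : ContinuousMul M2)


set_option maxHeartbeats 4000000 in
/-- `V(x) = I + ∫_{-x}^x K(x,t) dt` solves `BV' + QV = 0`, `V(0) = I`;
equivalently `U(0,x) = I + 2K₀(x)`. -/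
theorem statement4 (b : ℝ) (hb : 0 < b) (p q : ℝ → ℂ)
    (hQ : ContDiffOn ℝ 1 (diracPot p q) (Set.Icc 0 b))
    (K : ℝ → ℝ → M2)
    (hK : ContDiffOn ℝ 1 (fun z : ℝ × ℝ => K z.1 z.2) (OmegaPlus b))
    (hker : IsTransKernel b (diracPot p q) K)
    (V : ℝ → M2) (hV : ∀ x, V x = 1 + ∫ t in (-x)..x, K x t) :
    V 0 = 1 ∧
    (∃ V' : ℝ → M2, ∀ x ∈ Set.Icc 0 b,
      HasDerivWithinAt V (V' x) (Set.Icc 0 b) x ∧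
      Bmat * V' x + diracPot p q x * V x = 0) ∧
    (∀ x ∈ Set.Icc 0 b, V x = 1 + (2 : ℝ) • Kcoef K 0 x) := by
  classical
  open Statement4Aux in
  obtain ⟨hpde, hg1, hg2⟩ := hker
  -- ### Part 1
  have part1 : V 0 = 1 := by
    rw [hV 0]; simp
  -- ### Part 3
  have hleg0 : (legendreP 0) = 1 := by
    simp [legendreP]
  have part3 : ∀ x, V x = 1 + (2 : ℝ) • Kcoef K 0 x := by
    intro x
    rw [hV x, Kcoef, hleg0]
    simp only [Nat.cast_zero, mul_zero, zero_add, Polynomial.eval_one, one_smul, smul_smul]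
    norm_num
  -- ### Setup for part 2
  set Q : ℝ → M2 := diracPot p q with hQdef
  set Ω : Set (ℝ × ℝ) := OmegaPlus b with hΩdef
  set Kf : ℝ × ℝ → M2 := fun z => K z.1 z.2 with hKfdef
  have hconv : Convex ℝ Ω := by
    intro z hz w hw a c ha hc hac
    obtain ⟨hz1, hz2, hz3⟩ := hz; obtain ⟨hw1, hw2, hw3⟩ := hw
    rw [abs_le] at hz3 hw3
    refine ⟨?_, ?_, ?_⟩
    · show 0 ≤ a * z.1 + c * w.1
      nlinarith
    · show a * z.1 + c * w.1 ≤ b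
      nlinarith
    · show |a * z.2 + c * w.2| ≤ a * z.1 + c * w.1
      rw [abs_le]
      constructor <;> nlinarith
  have hmemint : ((b / 2 : ℝ), (0 : ℝ)) ∈ interior Ω := by
    rw [mem_interior_iff_mem_nhds, Metric.mem_nhds_iff]
    refine ⟨b / 4, by positivity, fun z hz => ?_⟩
    rw [Metric.mem_ball, Prod.dist_eq, max_lt_iff] at hz
    have h1 : |z.1 - b / 2| < b / 4 := by
      simpa [Real.dist_eq] using hz.1
    have h2 : |z.2| < b / 4 := by
      simpa [Real.dist_eq] using hz.2
    rw [abs_lt] at h1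
    have h3 := abs_nonneg z.2
    exact ⟨by linarith, by linarith, by linarith⟩
  have huniq : UniqueDiffOn ℝ Ω := uniqueDiffOn_convex hconv ⟨_, hmemint⟩
  set F' : ℝ × ℝ → (ℝ × ℝ) →L[ℝ] M2 := fderivWithin ℝ Kf Ω with hF'def
  have hdiff : ∀ z ∈ Ω, HasFDerivWithinAt Kf (F' z) Ω z := fun z hz =>
    ((hK.differentiableOn one_ne_zero) z hz).hasFDerivWithinAt
  have hF'cont : ContinuousOn F' Ω := hK.continuousOn_fderivWithin huniq le_rfl
  set Φ : ℝ × ℝ → ℝ × ℝ := clampPt b with hΦdef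
  have hΦc : Continuous Φ := continuous_clampPt b
  have hΦmem : ∀ z, Φ z ∈ Ω := fun z => clampPt_mem hb.le z
  have hΦeq : ∀ z ∈ Ω, Φ z = z := fun z hz => clampPt_eq hz
  set Kc : ℝ × ℝ → M2 := fun z => Kf (Φ z) with hKcdef
  set Dc : ℝ × ℝ → M2 := fun z => F' (Φ z) ((1 : ℝ), (0 : ℝ)) with hDcdef
  set Ec : ℝ × ℝ → M2 := fun z => F' (Φ z) ((0 : ℝ), (1 : ℝ)) with hEcdef
  have hKccont : Continuous Kc := hK.continuousOn.comp_continuous hΦc hΦmem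
  have hDccont : Continuous Dc :=
    (hF'cont.clm_apply continuousOn_const).comp_continuous hΦc hΦmem
  have hEccont : Continuous Ec :=
    (hF'cont.clm_apply continuousOn_const).comp_continuous hΦc hΦmem
  have hKceq : ∀ z ∈ Ω, Kc z = Kf z := fun z hz => by
    simp only [hKcdef, hΦeq z hz]
  have hDceq : ∀ z ∈ Ω, Dc z = F' z ((1 : ℝ), (0 : ℝ)) := fun z hz => by
    simp only [hDcdef, hΦeq z hz]
  have hEceq : ∀ z ∈ Ω, Ec z = F' z ((0 : ℝ), (1 : ℝ)) := fun z hz => by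
    simp only [hEcdef, hΦeq z hz]
  -- interval integrability helper
  have hii : ∀ (f : ℝ × ℝ → M2), Continuous f → ∀ (x a c : ℝ),
      IntervalIntegrable (fun t => f (x, t)) volume a c := fun f hf x a c =>
    (hf.comp (continuous_const.prodMk continuous_id)).intervalIntegrable a c
  -- slice derivatives
  have hsliceX : ∀ (t : ℝ) (s : Set ℝ) (x : ℝ), (x, t) ∈ Ω → (∀ u ∈ s, ((u : ℝ), t) ∈ Ω) →
      HasDerivWithinAt (fun u => Kf (u, t)) (Dc (x, t)) s x := by
    intro t s x hx hs
    have h1 : HasDerivWithinAt (fun u : ℝ => ((u : ℝ), t)) ((1 : ℝ), (0 : ℝ)) s x :=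
      ((hasDerivAt_id x).prodMk (hasDerivAt_const x t)).hasDerivWithinAt
    have h2 := (hdiff _ hx).comp_hasDerivWithinAt x h1 (fun u hu => hs u hu)
    rw [hDceq _ hx]
    exact h2
  have hsliceT : ∀ (x : ℝ) (s : Set ℝ) (t : ℝ), (x, t) ∈ Ω → (∀ u ∈ s, (x, (u : ℝ)) ∈ Ω) →
      HasDerivWithinAt (fun u => Kf (x, u)) (Ec (x, t)) s t := by
    intro x s t hx hs
    have h1 : HasDerivWithinAt (fun u : ℝ => (x, (u : ℝ))) ((0 : ℝ), (1 : ℝ)) s t :=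
      ((hasDerivAt_const t x).prodMk (hasDerivAt_id t)).hasDerivWithinAt
    have h2 := (hdiff _ hx).comp_hasDerivWithinAt t h1 (fun u hu => hs u hu)
    rw [hEceq _ hx]
    exact h2
  -- interior points
  have hInt : ∀ x t : ℝ, 0 < x → x < b → |t| < x → Ω ∈ 𝓝 ((x : ℝ), t) := by
    intro x t h1 h2 h3
    rw [Metric.mem_nhds_iff]
    refine ⟨min ((x - |t|) / 2) (b - x), lt_min (by linarith) (by linarith), fun z hz => ?_⟩
    rw [Metric.mem_ball, Prod.dist_eq, max_lt_iff] at hz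
    have hr2 : min ((x - |t|) / 2) (b - x) ≤ (x - |t|) / 2 := min_le_left _ _
    have hr3 : min ((x - |t|) / 2) (b - x) ≤ b - x := min_le_right _ _
    have hz1 : |z.1 - x| < min ((x - |t|) / 2) (b - x) := by
      simpa [Real.dist_eq] using hz.1
    have hz2 : |z.2 - t| < min ((x - |t|) / 2) (b - x) := by
      simpa [Real.dist_eq] using hz.2
    rw [abs_lt] at hz1 hz2
    have h4 := abs_nonneg t
    have h5 : |z.2| ≤ |t| + |z.2 - t| := by
      calc |z.2| = |t + (z.2 - t)| := by ring_nf
        _ ≤ |t| + |z.2 - t| := abs_add_le _ _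
    have h6 : |z.2 - t| < min ((x - |t|) / 2) (b - x) := abs_lt.mpr hz2
    refine ⟨by linarith, by linarith, by linarith⟩
  have hfullX : ∀ x t : ℝ, 0 < x → x < b → |t| < x →
      HasDerivAt (fun s => K s t) (Dc (x, t)) x ∧
      HasDerivAt (fun s => K x s) (Ec (x, t)) t := by
    intro x t h1 h2 h3
    have hmem : ((x : ℝ), t) ∈ Ω := ⟨h1.le, h2.le, h3.le⟩
    have hfd : HasFDerivAt Kf (F' (x, t)) (x, t) :=
      (hdiff _ hmem).hasFDerivAt (hInt x t h1 h2 h3)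
    constructor
    · have h4 : HasDerivAt (fun s : ℝ => ((s : ℝ), t)) ((1 : ℝ), (0 : ℝ)) x :=
        (hasDerivAt_id x).prodMk (hasDerivAt_const x t)
      have h5 := hfd.comp_hasDerivAt x h4
      rw [hDceq _ hmem]
      exact h5
    · have h4 : HasDerivAt (fun s : ℝ => ((x : ℝ), s)) ((0 : ℝ), (1 : ℝ)) t :=
        (hasDerivAt_const t x).prodMk (hasDerivAt_id t)
      have h5 := hfd.comp_hasDerivAt t h4
      rw [hEceq _ hmem]
      exact h5
  -- the functions G and W
  set G : ℝ → M2 := fun y => ∫ t in (-y)..y, Kc (y, t) with hGdef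
  set W : ℝ → M2 := fun y => Kc (y, y) + Kc (y, -y) + ∫ t in (-y)..y, Dc (y, t) with hWdef
  have hparam : ∀ (f : ℝ × ℝ → M2), Continuous f →
      Continuous (fun y : ℝ => ∫ t in (-y)..y, f (y, t)) := by
    intro f hf
    have huncurry : Continuous (Function.uncurry fun (y t : ℝ) => f (y, t)) := by
      exact hf
    have h1 : Continuous fun y : ℝ => ∫ t in (0 : ℝ)..y, f (y, t) :=
      intervalIntegral.continuous_parametric_intervalIntegral_of_continuous huncurry
        continuous_id
    have h2 : Continuous fun y : ℝ => ∫ t in (0 : ℝ)..(-y), f (y, t) :=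
      intervalIntegral.continuous_parametric_intervalIntegral_of_continuous huncurry
        continuous_neg
    have h3 : ∀ y : ℝ, (∫ t in (-y)..y, f (y, t)) =
        (∫ t in (0 : ℝ)..y, f (y, t)) - ∫ t in (0 : ℝ)..(-y), f (y, t) := by
      intro y
      rw [← intervalIntegral.integral_add_adjacent_intervals (a := -y) (b := 0) (c := y)
        (hii f hf y _ _) (hii f hf y _ _), intervalIntegral.integral_symm]
      abel
    exact (h1.sub h2).congr (fun y => (h3 y).symm)
  have hGcont : Continuous G := by
    have := hparam Kc hKccont
    simpa only [hGdef] using this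
  have hWcont : Continuous W := by
    have h1 := hparam Dc hDccont
    apply Continuous.add
    · apply Continuous.add
      · exact hKccont.comp (continuous_id.prodMk continuous_id)
      · exact hKccont.comp (continuous_id.prodMk continuous_neg)
    · exact h1
  -- key derivative of G
  have hGderiv : ∀ x ∈ Set.Icc (0 : ℝ) b, HasDerivWithinAt G (W x) (Set.Icc (0 : ℝ) b) x := by
    -- uniform continuity on a compact box
    have hcpt : IsCompact (Set.Icc ((0 : ℝ), -b) ((b : ℝ), b)) := isCompact_Icc
    have hKcu := hcpt.uniformContinuousOn_of_continuous hKccont.continuousOn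
    have hDcu := hcpt.uniformContinuousOn_of_continuous hDccont.continuousOn
    erw [Metric.uniformContinuousOn_iff] at hKcu hDcu
    intro x hx
    erw [hasDerivWithinAt_iff_isLittleO, Asymptotics.isLittleO_iff]
    intro c hc
    set ε : ℝ := c / (2 * b + 3) with hεdef
    have hεpos : 0 < ε := div_pos hc (by linarith)
    obtain ⟨δ₁, hδ₁pos, hδ₁⟩ := hKcu ε hεpos
    obtain ⟨δ₂, hδ₂pos, hδ₂⟩ := hDcu ε hεpos
    set δ : ℝ := min δ₁ δ₂ with hδdef
    have hδpos : 0 < δ := lt_min hδ₁pos hδ₂pos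
    have hδ1 : δ ≤ δ₁ := min_le_left _ _
    have hδ2 : δ ≤ δ₂ := min_le_right _ _
    -- membership in the box
    have hbox : ∀ u t : ℝ, 0 ≤ u → u ≤ b → |t| ≤ u →
        ((u : ℝ), t) ∈ Set.Icc ((0 : ℝ), -b) ((b : ℝ), b) := by
      intro u t h1 h2 h3
      rw [abs_le] at h3
      simp only [Set.mem_Icc, Prod.mk_le_mk]
      exact ⟨⟨h1, by linarith [h3.1]⟩, ⟨h2, by linarith [h3.2]⟩⟩
    -- the key one-sided estimate
    have key : ∀ u v : ℝ, 0 ≤ u → u ≤ v → v ≤ b → v - u < δ →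
        ‖G v - G u - (v - u) • W u‖ ≤ (2 * b + 2) * ε * (v - u) := by
      intro u v hu huv hvb hd
      have hub : u ≤ b := le_trans huv hvb
      have hv0 : 0 ≤ v := le_trans hu huv
      have hnu : -v ≤ -u := neg_le_neg huv
      have hnuu : -u ≤ u := neg_le_self hu
      have hsplit : G v = (∫ t in (-v)..(-u), Kc (v, t)) + (∫ t in (-u)..u, Kc (v, t)) +
          ∫ t in u..v, Kc (v, t) := by
        have e1 := intervalIntegral.integral_add_adjacent_intervals
          (a := -v) (b := -u) (c := u) (hii Kc hKccont v _ _) (hii Kc hKccont v _ _)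
        have e2 := intervalIntegral.integral_add_adjacent_intervals
          (a := -v) (b := u) (c := v) (hii Kc hKccont v _ _) (hii Kc hKccont v _ _)
        simp only [hGdef]
        rw [← e2, ← e1]
      have hWsmul : (v - u) • W u = (∫ t in (-v)..(-u), Kc (u, -u)) +
          (∫ t in (-u)..u, (v - u) • Dc (u, t)) + ∫ t in u..v, Kc (u, u) := by
        rw [intervalIntegral.integral_smul, intervalIntegral.integral_const,
          intervalIntegral.integral_const]
        simp only [hWdef, smul_add]
        have : (-u - -v) = v - u := by ring
        rw [this]
        abel
      have hiKv1 := hii Kc hKccont v (-v) (-u)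
      have hiKv2 := hii Kc hKccont v (-u) u
      have hiKv3 := hii Kc hKccont v u v
      have hiKu2 := hii Kc hKccont u (-u) u
      have hiDu2 : IntervalIntegrable (fun t => (v - u) • Dc (u, t)) volume (-u) u :=
        hii (fun z => (v - u) • Dc z) (by exact hDccont.const_smul (v - u)) u _ _
      have hmain : G v - G u - (v - u) • W u =
          (∫ t in (-v)..(-u), (Kc (v, t) - Kc (u, -u))) +
          (∫ t in (-u)..u, (Kc (v, t) - Kc (u, t) - (v - u) • Dc (u, t))) +
          ∫ t in u..v, (Kc (v, t) - Kc (u, u)) := by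
        rw [hsplit, hWsmul]
        have hGu : G u = ∫ t in (-u)..u, Kc (u, t) := by simp only [hGdef]
        rw [hGu]
        rw [intervalIntegral.integral_sub hiKv1 ((continuous_const).intervalIntegrable _ _),
          intervalIntegral.integral_sub (hiKv2.sub hiKu2) hiDu2,
          intervalIntegral.integral_sub hiKv2 hiKu2,
          intervalIntegral.integral_sub hiKv3 ((continuous_const).intervalIntegrable _ _)]
        abel
      rw [hmain]
      -- bound the three pieces
      have hb1 : ‖∫ t in (-v)..(-u), (Kc (v, t) - Kc (u, -u))‖ ≤ ε * |(-u) - (-v)| := by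
        apply intervalIntegral.norm_integral_le_of_norm_le_const
        intro t ht
        rw [Set.uIoc_of_le hnu] at ht
        have h1 : ((v : ℝ), t) ∈ Set.Icc ((0 : ℝ), -b) ((b : ℝ), b) :=
          hbox v t hv0 hvb (abs_le.mpr ⟨ht.1.le, by linarith [ht.2]⟩)
        have h2 : ((u : ℝ), -u) ∈ Set.Icc ((0 : ℝ), -b) ((b : ℝ), b) :=
          hbox u (-u) hu hub (by rw [abs_neg, abs_of_nonneg hu])
        have hdist : dist ((v : ℝ), t) ((u : ℝ), -u) < δ₁ := by
          rw [Prod.dist_eq]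
          dsimp only
          apply max_lt
          · rw [Real.dist_eq, abs_of_nonneg (by linarith)]
            linarith
          · rw [Real.dist_eq, abs_lt]
            constructor <;> linarith [ht.1, ht.2, hδpos]
        have := hδ₁ _ h1 _ h2 hdist
        rw [dist_eq_norm] at this
        exact this.le
      have hb3 : ‖∫ t in u..v, (Kc (v, t) - Kc (u, u))‖ ≤ ε * |v - u| := by
        apply intervalIntegral.norm_integral_le_of_norm_le_const
        intro t ht
        rw [Set.uIoc_of_le huv] at ht
        have h1 : ((v : ℝ), t) ∈ Set.Icc ((0 : ℝ), -b) ((b : ℝ), b) :=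
          hbox v t hv0 hvb (abs_le.mpr ⟨by linarith [ht.1], ht.2⟩)
        have h2 : ((u : ℝ), u) ∈ Set.Icc ((0 : ℝ), -b) ((b : ℝ), b) :=
          hbox u u hu hub (le_of_eq (abs_of_nonneg hu))
        have hdist : dist ((v : ℝ), t) ((u : ℝ), u) < δ₁ := by
          rw [Prod.dist_eq]
          dsimp only
          apply max_lt
          · rw [Real.dist_eq, abs_of_nonneg (by linarith)]
            linarith
          · rw [Real.dist_eq, abs_lt]
            constructor <;> linarith [ht.1, ht.2, hδpos]
        have := hδ₁ _ h1 _ h2 hdist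
        rw [dist_eq_norm] at this
        exact this.le
      have hb2 : ‖∫ t in (-u)..u, (Kc (v, t) - Kc (u, t) - (v - u) • Dc (u, t))‖ ≤
          (ε * (v - u)) * |u - (-u)| := by
        apply intervalIntegral.norm_integral_le_of_norm_le_const
        intro t ht
        rw [Set.uIoc_of_le hnuu] at ht
        have habs : |t| ≤ u := abs_le.mpr ⟨ht.1.le, ht.2⟩
        have hmemΩ : ∀ s : ℝ, u ≤ s → s ≤ v → ((s : ℝ), t) ∈ Ω := fun s hs1 hs2 =>
          ⟨le_trans hu hs1, le_trans hs2 hvb, le_trans habs hs1⟩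
        have hgder : ∀ s ∈ Set.Icc u v, HasDerivWithinAt
            (fun s : ℝ => Kf (s, t) - (s - u) • Dc (u, t))
            (Dc (s, t) - Dc (u, t)) (Set.Icc u v) s := by
          intro s hs
          have h1 := hsliceX t (Set.Icc u v) s (hmemΩ s hs.1 hs.2)
            (fun r hr => hmemΩ r hr.1 hr.2)
          have h2 : HasDerivWithinAt (fun s : ℝ => (s - u) • Dc (u, t)) (Dc (u, t))
              (Set.Icc u v) s := by
            have h2₀ := (((hasDerivAt_id s).sub_const u).smul_const (Dc (u, t))).hasDerivWithinAt
              (s := Set.Icc u v)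
            simp only [id, one_smul] at h2₀
            exact h2₀
          exact h1.sub h2
        have hbound : ∀ s ∈ Set.Ico u v, ‖Dc (s, t) - Dc (u, t)‖ ≤ ε := by
          intro s hs
          have h1 : ((s : ℝ), t) ∈ Set.Icc ((0 : ℝ), -b) ((b : ℝ), b) :=
            hbox s t (le_trans hu hs.1) (by linarith [hs.2]) (le_trans habs hs.1)
          have h2 : ((u : ℝ), t) ∈ Set.Icc ((0 : ℝ), -b) ((b : ℝ), b) :=
            hbox u t hu hub habs
          have hdist : dist ((s : ℝ), t) ((u : ℝ), t) < δ₂ := by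
            rw [Prod.dist_eq]
            apply max_lt
            · rw [Real.dist_eq, abs_of_nonneg (by linarith [hs.1])]
              linarith [hs.2]
            · rw [Real.dist_eq]
              simpa using hδpos.trans_le hδ2
          have := hδ₂ _ h1 _ h2 hdist
          rw [dist_eq_norm] at this
          exact this.le
        have hmvt := norm_image_sub_le_of_norm_deriv_le_segment' hgder hbound v
          (Set.right_mem_Icc.mpr huv)
        have he : (fun s : ℝ => Kf (s, t) - (s - u) • Dc (u, t)) v -
            (fun s : ℝ => Kf (s, t) - (s - u) • Dc (u, t)) u =
            Kc (v, t) - Kc (u, t) - (v - u) • Dc (u, t) := by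
          simp only [sub_self, zero_smul, sub_zero]
          rw [hKceq _ (hmemΩ v huv le_rfl), hKceq _ (hmemΩ u le_rfl huv)]
          abel
        rw [he] at hmvt
        exact hmvt
      have habs1 : |(-u) - (-v)| = v - u := by
        rw [abs_of_nonneg (by linarith)]; ring
      have habs2 : |u - (-u)| = 2 * u := by
        rw [abs_of_nonneg (by linarith)]; ring
      have habs3 : |v - u| = v - u := abs_of_nonneg (by linarith)
      rw [habs1] at hb1; rw [habs2] at hb2; rw [habs3] at hb3
      calc ‖(∫ t in (-v)..(-u), (Kc (v, t) - Kc (u, -u))) +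
            (∫ t in (-u)..u, (Kc (v, t) - Kc (u, t) - (v - u) • Dc (u, t))) +
            ∫ t in u..v, (Kc (v, t) - Kc (u, u))‖
          ≤ ε * (v - u) + ε * (v - u) * (2 * u) + ε * (v - u) :=
            le_trans norm_add₃_le (add_le_add (add_le_add hb1 hb2) hb3)
        _ ≤ (2 * b + 2) * ε * (v - u) := by
            linarith [mul_le_mul_of_nonneg_left hub (mul_nonneg hεpos.le (sub_nonneg.mpr huv))]
    -- conclude the little-o estimate
    have hev1 : ∀ᶠ y in 𝓝[Set.Icc (0 : ℝ) b] x, |y - x| < δ := by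
      have h1 : ∀ᶠ y in 𝓝 x, |y - x| < δ := by
        have := Metric.ball_mem_nhds x hδpos
        filter_upwards [this] with y hy
        rw [Metric.mem_ball, Real.dist_eq] at hy
        exact hy
      exact h1.filter_mono nhdsWithin_le_nhds
    have hev2 : ∀ᶠ y in 𝓝[Set.Icc (0 : ℝ) b] x, ‖W y - W x‖ ≤ ε := by
      have h1 : ∀ᶠ y in 𝓝 x, ‖W y - W x‖ ≤ ε := by
        have h2 := Metric.tendsto_nhds.mp (hWcont.tendsto x) ε hεpos
        filter_upwards [h2] with y hy
        rw [dist_eq_norm] at hy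
        exact hy.le
      exact h1.filter_mono nhdsWithin_le_nhds
    have hceq : (2 * b + 3) * ε = c := by
      rw [hεdef, mul_div_cancel₀]
      linarith
    filter_upwards [hev1, hev2, self_mem_nhdsWithin] with y h1 h2 hy
    rcases le_total x y with hxy | hyx
    · have h3 := key x y hx.1 hxy hy.2 (by rw [abs_of_nonneg (by linarith)] at h1; exact h1)
      have h4 : ‖y - x‖ = y - x := by rw [Real.norm_eq_abs, abs_of_nonneg (by linarith)]
      rw [h4]
      calc ‖G y - G x - (y - x) • W x‖ ≤ (2 * b + 2) * ε * (y - x) := h3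
        _ ≤ c * (y - x) := by nlinarith [mul_nonneg hεpos.le (sub_nonneg.mpr hxy)]
    · have h3 := key y x hy.1 hyx hx.2 (by
        rw [abs_sub_comm, abs_of_nonneg (by linarith)] at h1
        exact h1)
      have h5 : G y - G x - (y - x) • W x =
          -(G x - G y - (x - y) • W y) - (x - y) • (W y - W x) := by module
      have h6 : ‖(x - y) • (W y - W x)‖ ≤ (x - y) * ε := by
        rw [norm_smul, Real.norm_eq_abs, abs_of_nonneg (by linarith)]
        exact mul_le_mul_of_nonneg_left h2 (by linarith)
      have h4 : ‖y - x‖ = x - y := by rw [Real.norm_eq_abs, abs_sub_comm,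
        abs_of_nonneg (by linarith)]
      rw [h5, h4]
      calc ‖-(G x - G y - (x - y) • W y) - (x - y) • (W y - W x)‖
          ≤ ‖-(G x - G y - (x - y) • W y)‖ + ‖(x - y) • (W y - W x)‖ := norm_sub_le _ _
        _ ≤ (2 * b + 2) * ε * (x - y) + (x - y) * ε := by
            rw [norm_neg]; exact add_le_add h3 h6
        _ ≤ c * (x - y) := by nlinarith [mul_nonneg hεpos.le (sub_nonneg.mpr hyx)]
  have hVG : ∀ y ∈ Set.Icc (0 : ℝ) b, V y = 1 + G y := by
    intro y hy
    rw [hV y]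
    congr 1
    apply intervalIntegral.integral_congr
    intro t ht
    rw [Set.uIcc_of_le (neg_le_self hy.1)] at ht
    exact (hKceq (y, t) ⟨hy.1, hy.2, abs_le.mpr ⟨ht.1, ht.2⟩⟩).symm
  have hVderiv : ∀ x ∈ Set.Icc (0 : ℝ) b,
      HasDerivWithinAt V (W x) (Set.Icc (0 : ℝ) b) x := by
    intro x hx
    exact (((hGderiv x hx).const_add 1)).congr (fun y hy => hVG y hy) (hVG x hx)
  -- FTC in the second variable
  have hFTC : ∀ x : ℝ, 0 ≤ x → x ≤ b →
      (∫ t in (-x)..x, Ec (x, t)) = Kf (x, x) - Kf (x, -x) := by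
    intro x hx hxb
    have hmemIcc : ∀ t ∈ Set.Icc (-x) x, ((x : ℝ), t) ∈ Ω := fun t ht =>
      ⟨hx, hxb, abs_le.mpr ⟨ht.1, ht.2⟩⟩
    refine intervalIntegral.integral_eq_sub_of_hasDeriv_right_of_le (a := -x) (b := x)
      (f := fun t => Kf (x, t)) (f' := fun t => Ec (x, t)) (by linarith) ?_ ?_ ?_
    · exact ((hKccont.comp (continuous_const.prodMk continuous_id)).continuousOn).congr
        fun t ht => (hKceq _ (hmemIcc t ht)).symm
    · intro t ht
      have hmem : ((x : ℝ), t) ∈ Ω := hmemIcc t ⟨ht.1.le, ht.2.le⟩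
      have h1 := hsliceT x (Set.Ioc t x) t hmem (fun u hu =>
        ⟨hx, hxb, abs_le.mpr ⟨by linarith [ht.1, hu.1], hu.2⟩⟩)
      exact h1.mono_of_mem_nhdsWithin (Ioc_mem_nhdsGT_of_mem ⟨le_refl t, ht.2⟩)
    · exact hii Ec hEccont x _ _
  -- PDE on the open interval
  have hopen : ∀ x ∈ Set.Ioo (0 : ℝ) b, Bmat * W x + Q x * V x = 0 := by
    intro x hx
    have hxIcc : x ∈ Set.Icc (0 : ℝ) b := ⟨hx.1.le, hx.2.le⟩
    have hxx : ((x : ℝ), x) ∈ Ω := ⟨hx.1.le, hx.2.le, le_of_eq (abs_of_nonneg hx.1.le)⟩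
    have hxnx : ((x : ℝ), -x) ∈ Ω := ⟨hx.1.le, hx.2.le, by
      rw [abs_neg, abs_of_nonneg hx.1.le]⟩
    have hint_eq : ∀ t ∈ Set.Ioo (-x) x,
        Bmat * Dc (x, t) + Q x * Kc (x, t) = -(Ec (x, t) * Bmat) := by
      intro t ht
      have habs : |t| < x := abs_lt.mpr ⟨by linarith [ht.1], ht.2⟩
      have hmem : ((x : ℝ), t) ∈ Ω := ⟨hx.1.le, hx.2.le, habs.le⟩
      obtain ⟨hdX, hdT⟩ := hfullX x t hx.1 hx.2 habs
      have h1 := hpde x t hmem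
      erw [hdX.deriv, hdT.deriv] at h1
      have hKct : K x t = Kc (x, t) := (hKceq _ hmem).symm
      rw [hKct] at h1
      have h3 : Bmat * Dc (x, t) = -(Q x * Kc (x, t)) - Ec (x, t) * Bmat := by
        rw [← h1]; abel
      rw [h3]; abel
    have hiD := hii Dc hDccont x (-x) x
    have hiK := hii Kc hKccont x (-x) x
    have hiE := hii Ec hEccont x (-x) x
    have hiBD : IntervalIntegrable (fun t => Bmat * Dc (x, t)) volume (-x) x :=
      hii (fun z => Bmat * Dc z) (continuous_const.mul hDccont) x _ _
    have hiQK : IntervalIntegrable (fun t => Q x * Kc (x, t)) volume (-x) x :=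
      hii (fun z => Q x * Kc z) (continuous_const.mul hKccont) x _ _
    have hI : (∫ t in (-x)..x, (Bmat * Dc (x, t) + Q x * Kc (x, t))) =
        -((Kf (x, x) - Kf (x, -x)) * Bmat) := by
      have hae : ∀ᵐ t : ℝ ∂volume, t ≠ x := by
        rw [MeasureTheory.ae_iff]
        simp only [ne_eq, not_not, Set.setOf_eq_eq_singleton]
        exact MeasureTheory.measure_singleton (x : ℝ)
      have h1 : (∫ t in (-x)..x, (Bmat * Dc (x, t) + Q x * Kc (x, t))) =
          ∫ t in (-x)..x, -(Ec (x, t) * Bmat) := by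
        apply intervalIntegral.integral_congr_ae
        filter_upwards [hae] with t htx hmem2
        rw [Set.uIoc_of_le (by linarith [hx.1] : -x ≤ x)] at hmem2
        exact hint_eq t ⟨hmem2.1, lt_of_le_of_ne hmem2.2 htx⟩
      have h2 : (∫ t in (-x)..x, Ec (x, t) * Bmat) =
          (∫ t in (-x)..x, Ec (x, t)) * Bmat := by
        have h3 := (Statement4Aux.mulR Bmat).intervalIntegral_comp_comm hiE
        exact h3
      rw [h1, intervalIntegral.integral_neg, h2, hFTC x hx.1.le hx.2.le]
    have hsplit : (∫ t in (-x)..x, (Bmat * Dc (x, t) + Q x * Kc (x, t))) =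
        Bmat * (∫ t in (-x)..x, Dc (x, t)) + Q x * (∫ t in (-x)..x, Kc (x, t)) := by
      rw [intervalIntegral.integral_add hiBD hiQK]
      congr 1
      · have h3 := (Statement4Aux.mulL Bmat).intervalIntegral_comp_comm hiD
        exact h3
      · have h3 := (Statement4Aux.mulL (Q x)).intervalIntegral_comp_comm hiK
        exact h3
    have hkey : Bmat * (∫ t in (-x)..x, Dc (x, t)) + Q x * (∫ t in (-x)..x, Kc (x, t)) =
        -((K x x - K x (-x)) * Bmat) := by
      rw [← hsplit, hI]
    have hVx : V x = 1 + G x := hVG x hxIcc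
    have g1 := hg1 x hxIcc
    have g2 := hg2 x hxIcc
    have e1 : Bmat * K x x = -Q x + K x x * Bmat := eq_add_of_sub_eq g1
    have e2 : Bmat * K x (-x) = -(K x (-x) * Bmat) := eq_neg_of_add_eq_zero_left g2
    have hKcx : Kc (x, x) = K x x := hKceq _ hxx
    have hKcnx : Kc (x, -x) = K x (-x) := hKceq _ hxnx
    rw [hVx]
    simp only [hWdef, hGdef, hKcx, hKcnx]
    calc Bmat * (K x x + K x (-x) + ∫ t in (-x)..x, Dc (x, t)) +
          Q x * (1 + ∫ t in (-x)..x, Kc (x, t))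
        = Bmat * K x x + Bmat * K x (-x) +
          (Bmat * (∫ t in (-x)..x, Dc (x, t)) + Q x * (∫ t in (-x)..x, Kc (x, t))) +
          Q x := by
          rw [mul_add, mul_add, mul_add, mul_one]; abel
      _ = (-Q x + K x x * Bmat) + (-(K x (-x) * Bmat)) +
          (-((K x x - K x (-x)) * Bmat)) + Q x := by rw [e1, e2, hkey]
      _ = 0 := by rw [sub_mul]; abel
  -- closure argument
  have hall : ∀ x ∈ Set.Icc (0 : ℝ) b, Bmat * W x + Q x * V x = 0 := by
    intro x hx
    have hcl : x ∈ closure (Set.Ioo (0 : ℝ) b) := by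
      rw [closure_Ioo hb.ne]; exact hx
    have hVcont : ContinuousOn V (Set.Icc (0 : ℝ) b) :=
      ((continuous_const.add hGcont).continuousOn).congr hVG
    have hψ : ContinuousOn (fun y => Bmat * W y + Q y * V y) (Set.Icc (0 : ℝ) b) :=
      (continuousOn_const.mul hWcont.continuousOn).add (hQ.continuousOn.mul hVcont)
    have hne : (𝓝[Set.Ioo (0 : ℝ) b] x).NeBot := mem_closure_iff_nhdsWithin_neBot.mp hcl
    have h1 : Tendsto (fun y => Bmat * W y + Q y * V y) (𝓝[Set.Ioo (0 : ℝ) b] x)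
        (𝓝 (Bmat * W x + Q x * V x)) :=
      ((hψ x hx).mono Set.Ioo_subset_Icc_self).tendsto
    have h2 : Tendsto (fun y => Bmat * W y + Q y * V y) (𝓝[Set.Ioo (0 : ℝ) b] x) (𝓝 0) := by
      apply Tendsto.congr' _ tendsto_const_nhds
      filter_upwards [self_mem_nhdsWithin] with y hy
      exact (hopen y hy).symm
    exact tendsto_nhds_unique h1 h2
  exact ⟨part1, ⟨W, fun x hx => ⟨hVderiv x hx, hall x hx⟩⟩, fun x _ => part3 x⟩


end
end

section
/- Let Q be a Dirac potential on [0,b] with continuous entries, U(0,·) the matrix solution of B·U′(0,x) + Q(x)·U(0,x) = 0 with U(0,0) = I, and S the associated integral operator. Let h : [0,b] → ℂ and H : [0,b] → M₂ be continuously differentiable. Then for all x ∈ [0,b]: S[ t ↦ h(t)·(B·H′(t) + Q(t)·H(t)) ](x) = h(x)·H(x) − h(0)·U(0,x)·H(0) − S[ t ↦ h′(t)·B·H(t) ](x). In particular, if h(0) = 0 or H(0) = 0, then S[ t ↦ h(t)·(B·H′(t) + Q(t)·H(t)) ](x) = h(x)·H(x) − S[ t ↦ h′(t)·B·H(t) ](x).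 -/
noncomputable section

open MeasureTheory Set Filter Topology Polynomial intervalIntegral

attribute [local instance] Matrix.normedAddCommGroup Matrix.normedSpace

section Aux

/-- Left multiplication as a continuous linear map. -/
noncomputable def mulCLM : M2 →L[ℝ] M2 →L[ℝ] M2 :=
  LinearMap.toContinuousLinearMap
    { toFun := fun A => LinearMap.toContinuousLinearMap
        { toFun := fun B => A * B
          map_add' := fun _ _ => mul_add _ _ _
          map_smul' := fun r B => (mul_smul_comm r A B) }
      map_add' := by
        intro A B
        ext C
        simp [add_mul]
      map_smul' := by
        intro r A
        ext C
        simp [smul_mul_assoc] }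

@[simp] lemma mulCLM_apply (A B : M2) : mulCLM A B = A * B := rfl

/-- Conjugated transpose map `M ↦ Bᵀ Mᵀ B` as a continuous linear map. -/
noncomputable def conjT : M2 →L[ℝ] M2 :=
  LinearMap.toContinuousLinearMap
    { toFun := fun M => Bmat.transpose * M.transpose * Bmat
      map_add' := by
        intro A B
        simp [Matrix.transpose_add, mul_add, add_mul]
      map_smul' := by
        intro r A
        simp [Matrix.transpose_smul, Matrix.mul_smul, Matrix.smul_mul] }

@[simp] lemma conjT_apply (M : M2) : conjT M = Bmat.transpose * M.transpose * Bmat := rfl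

lemma HasDerivWithinAt.matmul {f g : ℝ → M2} {f' g' : M2} {s : Set ℝ} {x : ℝ}
    (hf : HasDerivWithinAt f f' s x) (hg : HasDerivWithinAt g g' s x) :
    HasDerivWithinAt (fun t => f t * g t) (f' * g x + f x * g') s x := by
  letI : NormedRing M2 := Matrix.linftyOpNormedRing
  letI : NormedAlgebra ℝ M2 := Matrix.linftyOpNormedAlgebra
  have hf2 : HasDerivWithinAt f f' s x := hf
  have hg2 : HasDerivWithinAt g g' s x := hg
  have := hf2.mul hg2
  exact this

lemma HasDerivWithinAt.conjT {f : ℝ → M2} {f' : M2} {s : Set ℝ} {x : ℝ}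
    (hf : HasDerivWithinAt f f' s x) :
    HasDerivWithinAt (fun t => Bmat.transpose * (f t).transpose * Bmat)
      (Bmat.transpose * f'.transpose * Bmat) s x := by
  have := (_root_.conjT.hasFDerivAt (x := f x)).comp_hasDerivWithinAt x hf
  exact this

lemma Bmat_mul_Bmat : Bmat * Bmat = (-1 : M2) := by
  ext i j
  fin_cases i <;> fin_cases j <;>
    simp [Bmat, Matrix.mul_apply, Fin.sum_univ_two, Matrix.one_apply]

lemma BmatT_eq : Bmat.transpose = !![0, -1; 1, 0] := by
  ext i j
  fin_cases i <;> fin_cases j <;> rfl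

lemma BmatT_mul_Bmat : Bmat.transpose * Bmat = (1 : M2) := by
  rw [BmatT_eq]
  ext i j
  fin_cases i <;> fin_cases j <;>
    simp [Bmat, Matrix.mul_apply, Fin.sum_univ_two, Matrix.one_apply]

lemma Bmat_mul_BmatT : Bmat * Bmat.transpose = (1 : M2) := by
  rw [BmatT_eq]
  ext i j
  fin_cases i <;> fin_cases j <;>
    simp [Bmat, Matrix.mul_apply, Fin.sum_univ_two, Matrix.one_apply]

lemma Bmat_mul_Bmat_mul (Z : M2) : Bmat * (Bmat * Z) = -Z := by
  rw [← mul_assoc, Bmat_mul_Bmat, neg_one_mul]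

lemma BmatT_mul_Bmat_mul (Z : M2) : Bmat.transpose * (Bmat * Z) = Z := by
  rw [← mul_assoc, BmatT_mul_Bmat, one_mul]

lemma Bmat_mul_BmatT_mul (Z : M2) : Bmat * (Bmat.transpose * Z) = Z := by
  rw [← mul_assoc, Bmat_mul_BmatT, one_mul]

lemma diracPot_transpose (p q : ℝ → ℂ) (x : ℝ) :
    (diracPot p q x).transpose = diracPot p q x := by
  ext i j
  fin_cases i <;> fin_cases j <;> simp [diracPot, Matrix.transpose_apply]

end Aux

/-- the integration-by-parts identity for `S[h·(A_Q H)]`. -/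
theorem statement10 (b : ℝ) (hb : 0 < b) (p q : ℝ → ℂ)
    (hQ : ContinuousOn (diracPot p q) (Set.Icc 0 b))
    (U U' : ℝ → M2) (hU0 : U 0 = 1)
    (hUd : ∀ x ∈ Set.Icc 0 b, HasDerivWithinAt U (U' x) (Set.Icc 0 b) x)
    (hUode : ∀ x ∈ Set.Icc 0 b, Bmat * U' x + diracPot p q x * U x = 0)
    (h h' : ℝ → ℂ)
    (hhd : ∀ x ∈ Set.Icc 0 b, HasDerivWithinAt h (h' x) (Set.Icc 0 b) x)
    (hh'c : ContinuousOn h' (Set.Icc 0 b))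
    (H H' : ℝ → M2)
    (hHd : ∀ x ∈ Set.Icc 0 b, HasDerivWithinAt H (H' x) (Set.Icc 0 b) x)
    (hH'c : ContinuousOn H' (Set.Icc 0 b)) :
    (∀ x ∈ Set.Icc 0 b,
      Sop U (fun t => h t • (Bmat * H' t + diracPot p q t * H t)) x
        = h x • H x - h 0 • (U x * H 0)
          - Sop U (fun t => h' t • (Bmat * H t)) x) ∧
    ((h 0 = 0 ∨ H 0 = 0) → ∀ x ∈ Set.Icc 0 b,
      Sop U (fun t => h t • (Bmat * H' t + diracPot p q t * H t)) x
        = h x • H x - Sop U (fun t => h' t • (Bmat * H t)) x) := by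
  set Q : ℝ → M2 := diracPot p q with hQdef
  -- basic continuity facts
  have hUc : ContinuousOn U (Set.Icc 0 b) := fun t ht => (hUd t ht).continuousWithinAt
  have hhc : ContinuousOn h (Set.Icc 0 b) := fun t ht => (hhd t ht).continuousWithinAt
  have hHc : ContinuousOn H (Set.Icc 0 b) := fun t ht => (hHd t ht).continuousWithinAt
  -- formula for U'
  have hU' : ∀ t ∈ Set.Icc 0 b, U' t = Bmat * (Q t * U t) := by
    intro t ht
    have h0 := hUode t ht
    have h1 : Bmat * U' t = -(Q t * U t) := by
      have := eq_neg_of_add_eq_zero_left h0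
      rw [this]
    calc U' t = -(Bmat * (Bmat * U' t)) := by rw [Bmat_mul_Bmat_mul, neg_neg]
    _ = -(Bmat * -(Q t * U t)) := by rw [h1]
    _ = Bmat * (Q t * U t) := by rw [mul_neg, neg_neg]
  have hQs : ∀ t, (Q t).transpose = Q t := fun t => diracPot_transpose p q t
  -- the candidate inverse W and its derivative
  set W : ℝ → M2 := fun t => Bmat.transpose * (U t).transpose * Bmat with hWdef
  set W' : ℝ → M2 := fun t => Bmat.transpose * (U' t).transpose * Bmat with hW'def
  have hWd : ∀ t ∈ Set.Icc 0 b, HasDerivWithinAt W (W' t) (Set.Icc 0 b) t := by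
    intro t ht
    exact (hUd t ht).conjT
  have hW'eq : ∀ t ∈ Set.Icc 0 b, W' t = Bmat.transpose * ((U t).transpose * Q t) := by
    intro t ht
    simp only [hW'def, hU' t ht]
    simp [Matrix.transpose_mul, hQs, mul_assoc, BmatT_mul_Bmat]
  have hW0 : W 0 = 1 := by
    simp [hWdef, hU0, BmatT_mul_Bmat]
  -- W t * U t = 1 on Icc 0 b
  have hWU : ∀ t ∈ Set.Icc 0 b, W t * U t = 1 := by
    have hGd : ∀ t ∈ Set.Icc 0 b,
        HasDerivWithinAt (fun s => W s * U s) 0 (Set.Icc 0 b) t := by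
      intro t ht
      have := (hWd t ht).matmul (hUd t ht)
      convert this using 1
      rw [hW'eq t ht, hU' t ht]
      simp only [hWdef]
      rw [eq_comm]
      calc Bmat.transpose * ((U t).transpose * Q t) * U t
            + Bmat.transpose * (U t).transpose * Bmat * (Bmat * (Q t * U t))
          = Bmat.transpose * ((U t).transpose * (Q t * U t))
            + Bmat.transpose * ((U t).transpose * (Bmat * (Bmat * (Q t * U t)))) := by
            simp [mul_assoc]
      _ = Bmat.transpose * ((U t).transpose * (Q t * U t))
            + Bmat.transpose * ((U t).transpose * -(Q t * U t)) := by
            rw [Bmat_mul_Bmat_mul]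
      _ = 0 := by simp [mul_neg]
    have hGc : ContinuousOn (fun s => W s * U s) (Set.Icc 0 b) :=
      fun t ht => ((hGd t ht).continuousWithinAt)
    have hconst := constant_of_has_deriv_right_zero hGc (fun t ht => by
      have h1 : HasDerivWithinAt (fun s => W s * U s) 0 (Set.Icc 0 b) t :=
        hGd t (Set.mem_Icc_of_Ico ht)
      exact h1.mono_of_mem_nhdsWithin (Icc_mem_nhdsGE_of_mem ht))
    intro t ht
    rw [hconst t ht, hW0, hU0, mul_one]
  have hUinv : ∀ t ∈ Set.Icc 0 b, (U t)⁻¹ = W t := fun t ht =>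
    Matrix.inv_eq_left_inv (hWU t ht)
  have hUW : ∀ t ∈ Set.Icc 0 b, U t * W t = 1 := fun t ht =>
    mul_eq_one_comm.mp (hWU t ht)
  -- continuity of auxiliary functions
  have hWc : ContinuousOn W (Set.Icc 0 b) := fun t ht => (hWd t ht).continuousWithinAt
  have hU'c : ContinuousOn U' (Set.Icc 0 b) := by
    apply ContinuousOn.congr (f := fun t => Bmat * (Q t * U t)) _ hU'
    exact continuousOn_const.mul (hQ.mul hUc)
  have hW'c : ContinuousOn W' (Set.Icc 0 b) := by
    have : ContinuousOn (fun t => _root_.conjT (U' t)) (Set.Icc 0 b) :=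
      _root_.conjT.continuous.comp_continuousOn hU'c
    simpa using this
  -- the function F and its derivative
  set F : ℝ → M2 := fun t => h t • (W t * H t) with hFdef
  set F' : ℝ → M2 := fun t => h t • (W' t * H t + W t * H' t) + h' t • (W t * H t)
    with hF'def
  have hFd : ∀ t ∈ Set.Icc 0 b, HasDerivWithinAt F (F' t) (Set.Icc 0 b) t := by
    intro t ht
    exact (hhd t ht).smul ((hWd t ht).matmul (hHd t ht))
  have hFc : ContinuousOn F (Set.Icc 0 b) := fun t ht => (hFd t ht).continuousWithinAt
  have hF'c : ContinuousOn F' (Set.Icc 0 b) := by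
    apply ContinuousOn.add
    · exact hhc.smul (((hW'c.mul hHc)).add (hWc.mul hH'c))
    · exact hh'c.smul (hWc.mul hHc)
  -- the two integrands
  set I1 : ℝ → M2 := fun t =>
    (U t)⁻¹ * Bmat.transpose * (h t • (Bmat * H' t + Q t * H t)) with hI1def
  set I2 : ℝ → M2 := fun t =>
    (U t)⁻¹ * Bmat.transpose * (h' t • (Bmat * H t)) with hI2def
  -- the key pointwise identity
  have hkey : ∀ t ∈ Set.Icc 0 b, F' t = I1 t + I2 t := by
    intro t ht
    simp only [hI1def, hI2def, hF'def, hUinv t ht, mul_smul_comm]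
    have hWB : W t * Bmat.transpose = Bmat.transpose * (U t).transpose := by
      simp only [hWdef]
      rw [mul_assoc, Bmat_mul_BmatT, mul_one]
    have e2 : W t * Bmat.transpose * (Bmat * H t) = W t * H t := by
      rw [mul_assoc, BmatT_mul_Bmat_mul]
    have e2' : W t * Bmat.transpose * (Bmat * H' t) = W t * H' t := by
      rw [mul_assoc, BmatT_mul_Bmat_mul]
    have e3 : W t * Bmat.transpose * (Q t * H t) = W' t * H t := by
      rw [hWB, hW'eq t ht]
      simp only [mul_assoc]
    rw [mul_add (W t * Bmat.transpose), e2, e2', e3, add_comm (W' t * H t)]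
  -- main identity
  have main : ∀ x ∈ Set.Icc 0 b,
      Sop U (fun t => h t • (Bmat * H' t + Q t * H t)) x
        = h x • H x - h 0 • (U x * H 0)
          - Sop U (fun t => h' t • (Bmat * H t)) x := by
    intro x hx
    obtain ⟨hx0, hxb⟩ := hx
    have hsub : Set.Icc 0 x ⊆ Set.Icc 0 b := Set.Icc_subset_Icc le_rfl hxb
    have huIcc : Set.uIcc (0:ℝ) x = Set.Icc 0 x := Set.uIcc_of_le hx0
    have hI1c : ContinuousOn I1 (Set.Icc 0 b) := by
      apply ContinuousOn.congr
        (f := fun t => W t * Bmat.transpose *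
          (h t • (Bmat * H' t + Q t * H t)))
      · exact (hWc.mul continuousOn_const).mul
          (hhc.smul ((continuousOn_const.mul hH'c).add (hQ.mul hHc)))
      · intro t ht
        simp only [hI1def, hUinv t ht]
    have hI2c : ContinuousOn I2 (Set.Icc 0 b) := by
      apply ContinuousOn.congr
        (f := fun t => W t * Bmat.transpose * (h' t • (Bmat * H t)))
      · exact (hWc.mul continuousOn_const).mul
          (hh'c.smul (continuousOn_const.mul hHc))
      · intro t ht
        simp only [hI2def, hUinv t ht]
    have hint1 : @IntervalIntegrable M2 PseudoMetricSpace.toUniformSpace.toTopologicalSpace _ I1 volume 0 x := by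
      have : ContinuousOn I1 (Set.uIcc (0:ℝ) x) := huIcc ▸ hI1c.mono hsub
      exact this.intervalIntegrable
    have hint2 : @IntervalIntegrable M2 PseudoMetricSpace.toUniformSpace.toTopologicalSpace _ I2 volume 0 x := by
      have : ContinuousOn I2 (Set.uIcc (0:ℝ) x) := huIcc ▸ hI2c.mono hsub
      exact this.intervalIntegrable
    have hintF' : @IntervalIntegrable M2 PseudoMetricSpace.toUniformSpace.toTopologicalSpace _ F' volume 0 x := by
      have : ContinuousOn F' (Set.uIcc (0:ℝ) x) := huIcc ▸ hF'c.mono hsub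
      exact this.intervalIntegrable
    have hFTC : ∫ t in (0:ℝ)..x, F' t = F x - F 0 := by
      apply intervalIntegral.integral_eq_sub_of_hasDeriv_right_of_le hx0
        (hFc.mono hsub) _ hintF'
      intro t ht
      have htb : t ∈ Set.Icc 0 b := ⟨ht.1.le, (ht.2.trans_le hxb).le⟩
      exact ((hFd t htb).hasDerivAt
        (Icc_mem_nhds ht.1 (ht.2.trans_le hxb))).hasDerivWithinAt
    have hsplit : ∫ t in (0:ℝ)..x, F' t
        = (∫ t in (0:ℝ)..x, I1 t) + ∫ t in (0:ℝ)..x, I2 t := by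
      rw [← intervalIntegral.integral_add hint1 hint2]
      apply intervalIntegral.integral_congr
      intro t ht
      exact hkey t (hsub (huIcc ▸ ht))
    have hI1val : ∫ t in (0:ℝ)..x, I1 t
        = F x - F 0 - ∫ t in (0:ℝ)..x, I2 t := by
      rw [← hFTC, hsplit]
      abel
    have hFx : U x * F x = h x • H x := by
      simp only [hFdef, mul_smul_comm]
      rw [← mul_assoc, hUW x ⟨hx0, hxb⟩, one_mul]
    have hF0 : U x * F 0 = h 0 • (U x * H 0) := by
      simp only [hFdef, hW0, one_mul, mul_smul_comm]
    show U x * (∫ t in (0:ℝ)..x, I1 t)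
      = h x • H x - h 0 • (U x * H 0) - U x * (∫ t in (0:ℝ)..x, I2 t)
    rw [hI1val, mul_sub, mul_sub, hFx, hF0]
  refine ⟨main, ?_⟩
  intro h0 x hx
  rw [main x hx]
  rcases h0 with h0 | h0 <;> simp [h0]

end
end

section
/- Let ν : [0,b] → ℂ be integrable, p_ν := Im ν, q_ν := −Re ν, and let Q_ν be the Dirac potential with rows (p_ν, q_ν) and (q_ν, −p_ν). Fix λ ∈ ℂ and let U_ν : [0,b] → M₂ be absolutely continuous with B·U_ν′(x) + Q_ν(x)·U_ν(x) = λ·U_ν(x) for almost every x and U_ν(0) = I. Let A be the 2×2 matrix with rows (i, −i) and (1, 1), σ₃ the diagonal matrix diag(1, −1), and Q_ZS(x) the 2×2 matrix with rows (0, ν(x)) and (conj(ν(x)), 0). Then Z(x) := A⁻¹·U_ν(x)·A is absolutely continuous, Z(0) = I, and Z′(x) = Q_ZS(x)·Z(x) + i·λ·σ₃·Z(x) for almost every x ∈ [0,b]; that is, Z is the fundamental solution of the ZS-AKNS system with potential ν. -/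
noncomputable section

open MeasureTheory Set Filter Topology Polynomial intervalIntegral

attribute [local instance] Matrix.normedAddCommGroup Matrix.normedSpace

lemma I_pow_3 : Complex.I ^ 3 = -Complex.I := by
  rw [(by norm_num : 3 = 2 + 1), pow_succ, Complex.I_sq]; ring

def Amat : M2 := !![Complex.I, -Complex.I; 1, 1]
def Ainv : M2 := !![-Complex.I/2, 1/2; Complex.I/2, 1/2]

lemma ainv_mul_a : Ainv * Amat = 1 := by
  ext i j; fin_cases i <;> fin_cases j <;>
    simp [Ainv, Amat, Matrix.mul_apply, Fin.sum_univ_two]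
  all_goals ring_nf
  all_goals simp [Complex.I_sq, I_pow_3]
  all_goals ring_nf

lemma negB_mul_B : (-Bmat) * Bmat = 1 := by
  ext i j; fin_cases i <;> fin_cases j <;>
    simp [Bmat, Matrix.mul_apply, Fin.sum_univ_two]

set_option maxHeartbeats 1000000 in
lemma key (lam p q : ℂ) (Up U : M2)
    (h : Bmat * Up + !![p, q; q, -p] * U = lam • U) :
    Ainv * Up * Amat
      = !![0, -q + p * Complex.I; -q - p * Complex.I, 0] * (Ainv * U * Amat)
        + (Complex.I * lam) • (!![1, 0; 0, -1] * (Ainv * U * Amat)) := by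
  have h2 : Bmat * Up = lam • U - !![p, q; q, -p] * U := eq_sub_of_add_eq h
  have hU' : Up = (-Bmat) * (lam • U - !![p, q; q, -p] * U) := by
    rw [← h2, ← mul_assoc, negB_mul_B, one_mul]
  subst hU'
  rw [Matrix.eta_fin_two U]
  generalize U 0 0 = a; generalize U 0 1 = b
  generalize U 1 0 = c; generalize U 1 1 = d
  ext i j
  fin_cases i <;> fin_cases j <;>
    simp [Ainv, Amat, Bmat, Matrix.mul_apply, Fin.sum_univ_two, Matrix.smul_apply,
      Matrix.sub_apply, Matrix.neg_apply]
  all_goals ring_nf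
  all_goals simp [Complex.I_sq, I_pow_3]
  all_goals ring_nf

/-- The conjugation map `M ↦ Ainv * M * Amat` as a continuous linear map. -/
def conjCLM : M2 →L[ℂ] M2 :=
  LinearMap.toContinuousLinearMap ((LinearMap.mulRight ℂ Amat).comp (LinearMap.mulLeft ℂ Ainv))

lemma conjCLM_apply (M : M2) : conjCLM M = Ainv * M * Amat := rfl

/-- `Z = A⁻¹·U_ν·A` is the fundamental solution of the ZS-AKNS system. -/
theorem statement11 (b : ℝ) (hb : 0 < b) (ν : ℝ → ℂ)
    (hν : IntegrableOn ν (Set.Icc 0 b)) (lam : ℂ)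
    (U U' : ℝ → M2)
    (hU'int : @IntegrableOn ℝ M2 _ _ SeminormedAddGroup.toContinuousENorm U' (Set.Icc 0 b) volume)
    (hUrep : ∀ x ∈ Set.Icc 0 b, U x = 1 + ∫ t in (0 : ℝ)..x, U' t)
    (hode : ∀ᵐ x ∂(volume : Measure ℝ), x ∈ Set.Icc 0 b →
      Bmat * U' x
          + diracPot (fun s => ((ν s).im : ℂ)) (fun s => ((-(ν s).re : ℝ) : ℂ)) x * U x
        = lam • U x)
    (A : M2) (hA : A = !![Complex.I, -Complex.I; 1, 1])
    (Z : ℝ → M2) (hZ : ∀ x, Z x = A⁻¹ * U x * A) :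
    Z 0 = 1 ∧
    ∃ Z' : ℝ → M2, @IntegrableOn ℝ M2 _ _ SeminormedAddGroup.toContinuousENorm Z' (Set.Icc 0 b) volume ∧
      (∀ x ∈ Set.Icc 0 b, Z x = 1 + ∫ t in (0 : ℝ)..x, Z' t) ∧
      ∀ᵐ x ∂(volume : Measure ℝ), x ∈ Set.Icc 0 b →
        Z' x = !![0, ν x; (starRingEnd ℂ) (ν x), 0] * Z x
          + (Complex.I * lam) • (!![1, 0; 0, -1] * Z x) := by
  letI : NormedAddCommGroup M2 := Matrix.normedAddCommGroup
  have hAeq : A = Amat := by rw [hA]; rfl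
  subst hAeq
  have hAinv : Amat⁻¹ = Ainv := Matrix.inv_eq_left_inv ainv_mul_a
  have hZ2 : ∀ x, Z x = Ainv * U x * Amat := fun x => by rw [hZ x, hAinv]
  have h0b : (0:ℝ) ∈ Set.Icc 0 b := ⟨le_refl 0, hb.le⟩
  have hU0 : U 0 = 1 := by rw [hUrep 0 h0b]; simp
  constructor
  · rw [hZ2 0, hU0, mul_one, ainv_mul_a]
  refine ⟨fun x => Ainv * U' x * Amat, ?_, ?_, ?_⟩
  · exact conjCLM.integrable_comp hU'int
  · intro x hx
    have hint : @IntervalIntegrable M2 _ NormedAddGroup.toENormedAddMonoid U' volume 0 x := by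
      rw [intervalIntegrable_iff_integrableOn_Icc_of_le hx.1]
      exact hU'int.mono_set (Set.Icc_subset_Icc le_rfl hx.2)
    rw [hZ2 x, hUrep x hx, mul_add, add_mul, mul_one, ainv_mul_a]
    congr 1
    have := conjCLM.intervalIntegral_comp_comm hint
    exact this.symm
  · filter_upwards [hode] with x hx hxmem
    have h : Bmat * U' x
        + !![(((ν x).im : ℝ) : ℂ), ((-(ν x).re : ℝ) : ℂ);
             ((-(ν x).re : ℝ) : ℂ), -(((ν x).im : ℝ) : ℂ)] * U x = lam • U x := hx hxmem
    have hkey := key lam (((ν x).im : ℝ) : ℂ) ((-(ν x).re : ℝ) : ℂ) (U' x) (U x) h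
    have e1 : (!![0, -((-(ν x).re : ℝ) : ℂ) + (((ν x).im : ℝ) : ℂ) * Complex.I;
        -((-(ν x).re : ℝ) : ℂ) - (((ν x).im : ℝ) : ℂ) * Complex.I, 0] : M2)
        = !![0, ν x; (starRingEnd ℂ) (ν x), 0] := by
      ext i j
      fin_cases i <;> fin_cases j <;>
        simp [Complex.ext_iff]
    rw [hZ2 x, ← e1]; exact hkey


end
end

section
/- For every λ ∈ ℂ and every t ∈ ℝ, the operator norm of the matrix U₀(λ,t) (as a linear operator on ℂ² with the Euclidean norm) equals e^{|Im λ|·|t|}. -/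
noncomputable section

open MeasureTheory Set Filter Topology Polynomial intervalIntegral

attribute [local instance] Matrix.normedAddCommGroup Matrix.normedSpace

/-- parallelogram-type identity -/
lemma para_aux (x y : ℂ) :
    Complex.normSq (x + Complex.I * y) + Complex.normSq (x - Complex.I * y) =
      2 * (Complex.normSq x + Complex.normSq y) := by
  simp [Complex.normSq_apply, Complex.add_re, Complex.add_im, Complex.sub_re, Complex.sub_im,
    Complex.mul_re, Complex.mul_im]
  ring

lemma sqle_aux {a b : ℝ} (ha : 0 ≤ a) (hb : 0 ≤ b) (h : a ^ 2 ≤ b ^ 2) : a ≤ b := by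
  nlinarith

lemma U0_apply_aux (lam : ℂ) (t : ℝ) (x : Fin 2 → ℂ) :
    Matrix.toEuclideanCLM (𝕜 := ℂ) (U0 lam t) ((WithLp.equiv 2 (Fin 2 → ℂ)).symm x) =
      (WithLp.equiv 2 (Fin 2 → ℂ)).symm
        ![Complex.cos (lam * t) * x 0 - Complex.sin (lam * t) * x 1,
          Complex.sin (lam * t) * x 0 + Complex.cos (lam * t) * x 1] := by
  rw [WithLp.equiv_symm_apply, Matrix.toEuclideanCLM_toLp]
  congr 1
  funext i
  fin_cases i <;>
    simp [U0, Matrix.mulVec, dotProduct, Fin.sum_univ_two, sub_eq_add_neg]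

lemma norm_sq_aux (y : Fin 2 → ℂ) :
    ‖(WithLp.equiv 2 (Fin 2 → ℂ)).symm y‖ ^ 2 =
      Complex.normSq (y 0) + Complex.normSq (y 1) := by
  rw [EuclideanSpace.norm_eq, Real.sq_sqrt (by positivity)]
  simp [Fin.sum_univ_two, Complex.sq_norm]

/-- `|U₀(λ,t)| = e^{|Im λ|·|t|}`. -/
theorem statement12 (lam : ℂ) (t : ℝ) :
    opNorm (U0 lam t) = Real.exp (|lam.im| * |t|) := by
  set z : ℂ := lam * t with hz
  have hzim : z.im = lam.im * t := by simp [hz, Complex.mul_im]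
  have hM : |lam.im| * |t| = |z.im| := by rw [hzim, abs_mul]
  rw [hM]
  set M : ℝ := Real.exp |z.im| with hMdef
  have hMpos : 0 < M := Real.exp_pos _
  set c : ℂ := Complex.cos z with hc
  set s : ℂ := Complex.sin z with hs
  set T := Matrix.toEuclideanCLM (𝕜 := ℂ) (U0 lam t) with hT
  -- norms of the eigenvalues
  have hE : Complex.normSq (c + s * Complex.I) = (Real.exp (-z.im)) ^ 2 := by
    rw [hc, hs, Complex.cos_add_sin_I, Complex.normSq_eq_norm_sq, Complex.norm_exp]
    congr 1
    simp [Complex.mul_re]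
  have hF : Complex.normSq (c - s * Complex.I) = (Real.exp z.im) ^ 2 := by
    rw [hc, hs, Complex.cos_sub_sin_I, Complex.normSq_eq_norm_sq, Complex.norm_exp]
    congr 1
    simp [Complex.mul_re]
  have hEle : Real.exp (-z.im) ≤ M := Real.exp_le_exp.2 (neg_le_abs _)
  have hFle : Real.exp z.im ≤ M := Real.exp_le_exp.2 (le_abs_self _)
  -- squared norm of T v
  have key : ∀ x : Fin 2 → ℂ,
      ‖T ((WithLp.equiv 2 (Fin 2 → ℂ)).symm x)‖ ^ 2 =
        (Complex.normSq (c + s * Complex.I) * Complex.normSq (x 0 + Complex.I * x 1) +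
         Complex.normSq (c - s * Complex.I) * Complex.normSq (x 0 - Complex.I * x 1)) / 2 := by
    intro x
    rw [hT, U0_apply_aux, norm_sq_aux]
    set w0 : ℂ := c * x 0 - s * x 1 with hw0
    set w1 : ℂ := s * x 0 + c * x 1 with hw1
    rw [show (![w0, w1] : Fin 2 → ℂ) 0 = w0 from rfl, show (![w0, w1] : Fin 2 → ℂ) 1 = w1 from rfl]
    have e0 : w0 + Complex.I * w1 = (c + s * Complex.I) * (x 0 + Complex.I * x 1) := by
      rw [hw0, hw1]; linear_combination (-(s * x 1)) * Complex.I_sq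
    have e1 : w0 - Complex.I * w1 = (c - s * Complex.I) * (x 0 - Complex.I * x 1) := by
      rw [hw0, hw1]; linear_combination (-(s * x 1)) * Complex.I_sq
    have := para_aux w0 w1
    rw [e0, e1, Complex.normSq_mul, Complex.normSq_mul] at this
    linarith
  show ‖T‖ = M
  apply le_antisymm
  · -- opNorm ≤ M
    apply ContinuousLinearMap.opNorm_le_bound _ hMpos.le
    intro v
    have hv : v = (WithLp.equiv 2 (Fin 2 → ℂ)).symm (WithLp.equiv 2 (Fin 2 → ℂ) v) := by simp
    set x : Fin 2 → ℂ := WithLp.equiv 2 (Fin 2 → ℂ) v with hx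
    apply sqle_aux (norm_nonneg _) (by positivity)
    rw [mul_pow, hv, key]
    have hvn : ‖(WithLp.equiv 2 (Fin 2 → ℂ)).symm x‖ ^ 2 =
        (Complex.normSq (x 0 + Complex.I * x 1) + Complex.normSq (x 0 - Complex.I * x 1)) / 2 := by
      rw [norm_sq_aux]
      have := para_aux (x 0) (x 1)
      linarith
    rw [hvn]
    have n1 := Complex.normSq_nonneg (x 0 + Complex.I * x 1)
    have n2 := Complex.normSq_nonneg (x 0 - Complex.I * x 1)
    have b1 : Complex.normSq (c + s * Complex.I) ≤ M ^ 2 := by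
      rw [hE]; exact pow_le_pow_left₀ (Real.exp_pos _).le hEle 2
    have b2 : Complex.normSq (c - s * Complex.I) ≤ M ^ 2 := by
      rw [hF]; exact pow_le_pow_left₀ (Real.exp_pos _).le hFle 2
    nlinarith
  · -- M ≤ opNorm
    rcases le_or_gt 0 z.im with him | him
    · -- eigenvector ![1, I] with eigenvalue of modulus exp z.im = M
      set v := (WithLp.equiv 2 (Fin 2 → ℂ)).symm ![(1 : ℂ), Complex.I] with hv
      have hMz : M = Real.exp z.im := by rw [hMdef, abs_of_nonneg him]
      have h1 : ‖T v‖ ^ 2 = 2 * M ^ 2 := by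
        rw [hv, key]
        simp only [Matrix.cons_val_zero, Matrix.cons_val_one, Matrix.head_cons]
        rw [hF, hMz]
        simp [Complex.I_mul_I, Complex.normSq_mul]
        ring_nf
        simp [Complex.normSq_apply]
        ring
      have h2 : ‖v‖ ^ 2 = 2 := by
        rw [hv, norm_sq_aux]
        simp [Complex.normSq_apply]
        norm_num
      have h3 := T.le_opNorm v
      have hTn : (0:ℝ) ≤ ‖T‖ := norm_nonneg _
      have hvn : (0:ℝ) ≤ ‖v‖ := norm_nonneg _
      have hTvn : (0:ℝ) ≤ ‖T v‖ := norm_nonneg _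
      have h4 : ‖T v‖ ^ 2 ≤ ‖T‖ ^ 2 * ‖v‖ ^ 2 := by
        have := mul_le_mul h3 h3 hTvn (mul_nonneg hTn hvn)
        nlinarith
      have h5 : M ^ 2 ≤ ‖T‖ ^ 2 := by rw [h1, h2] at h4; linarith
      exact sqle_aux hMpos.le hTn h5
    · set v := (WithLp.equiv 2 (Fin 2 → ℂ)).symm ![(1 : ℂ), -Complex.I] with hv
      have hMz : M = Real.exp (-z.im) := by rw [hMdef, abs_of_neg him]
      have h1 : ‖T v‖ ^ 2 = 2 * M ^ 2 := by
        rw [hv, key]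
        simp only [Matrix.cons_val_zero, Matrix.cons_val_one, Matrix.head_cons]
        rw [hE, hMz]
        simp [Complex.I_mul_I, Complex.normSq_mul]
        ring_nf
        simp [Complex.normSq_apply]
        ring
      have h2 : ‖v‖ ^ 2 = 2 := by
        rw [hv, norm_sq_aux]
        simp [Complex.normSq_apply]
        norm_num
      have h3 := T.le_opNorm v
      have hTn : (0:ℝ) ≤ ‖T‖ := norm_nonneg _
      have hvn : (0:ℝ) ≤ ‖v‖ := norm_nonneg _
      have hTvn : (0:ℝ) ≤ ‖T v‖ := norm_nonneg _
      have h4 : ‖T v‖ ^ 2 ≤ ‖T‖ ^ 2 * ‖v‖ ^ 2 := by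
        have := mul_le_mul h3 h3 hTvn (mul_nonneg hTn hvn)
        nlinarith
      have h5 : M ^ 2 ≤ ‖T‖ ^ 2 := by rw [h1, h2] at h4; linarith
      exact sqle_aux hMpos.le hTn h5


end
end

section
/- Let Q be a Dirac potential on [0,b], K an integrable transmutation kernel for Q, N a nonnegative integer, x ∈ (0,b], and suppose ε₂ ≥ 0 is such that ‖K(x,·) − K^N(x,·)‖_{L²(−x,x)} ≤ ε₂. Then: (a) for every λ ∈ ℝ, |U(λ,x) − U^N(λ,x)| ≤ √(2x)·ε₂; (b) for every λ ∈ ℂ with Im λ ≠ 0, |U(λ,x) − U^N(λ,x)| ≤ ε₂·√((e^{2|Im λ|·x} − 1)/|Im λ|). -/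
noncomputable section

open MeasureTheory Set Filter Topology Polynomial intervalIntegral

attribute [local instance] Matrix.normedAddCommGroup Matrix.normedSpace

instance M2.continuousENorm : ContinuousENorm M2 := SeminormedAddGroup.toContinuousENorm

/- ==== auxiliary machinery added for the proof of statement18 ==== -/

abbrev EC2 : Type := EuclideanSpace ℂ (Fin 2)

/-- `Matrix.toEuclideanCLM` as a continuous linear map. -/
def LmapC : M2 →L[ℂ] (EC2 →L[ℂ] EC2) :=
  LinearMap.toContinuousLinearMap
    { toFun := fun A => Matrix.toEuclideanCLM (𝕜 := ℂ) A
      map_add' := fun A B => map_add _ A B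
      map_smul' := fun c A => map_smul _ c A }

/-- The inverse of `Matrix.toEuclideanCLM` as a continuous linear map. -/
def LinvC : (EC2 →L[ℂ] EC2) →L[ℂ] M2 :=
  LinearMap.toContinuousLinearMap
    { toFun := fun T => (Matrix.toEuclideanCLM (𝕜 := ℂ)).symm T
      map_add' := fun A B => map_add _ A B
      map_smul' := fun c A => map_smul _ c A }

lemma LinvC_LmapC (A : M2) : LinvC (LmapC A) = A := by
  show (Matrix.toEuclideanCLM (𝕜 := ℂ)).symm (Matrix.toEuclideanCLM (𝕜 := ℂ) A) = A
  exact StarAlgEquiv.symm_apply_apply _ A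

lemma LmapC_mul (A B : M2) : LmapC (A * B) = LmapC A * LmapC B :=
  map_mul (Matrix.toEuclideanCLM (𝕜 := ℂ)) A B

lemma opNorm_eq (A : M2) : opNorm A = ‖LmapC A‖ := rfl

lemma opNorm_nonneg (A : M2) : 0 ≤ opNorm A := norm_nonneg _

lemma key_id (u w : ℂ) : ‖u‖^2 + ‖w‖^2 = (‖u + Complex.I*w‖^2 + ‖u - Complex.I*w‖^2)/2 := by
  simp only [Complex.sq_norm, Complex.normSq_apply, Complex.add_re,
    Complex.add_im, Complex.sub_re, Complex.sub_im, Complex.mul_re, Complex.mul_im,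
    Complex.I_re, Complex.I_im]
  ring

lemma rot_ineq (c s a b : ℂ) (M : ℝ) (hM : 0 ≤ M)
    (h1 : ‖c + Complex.I*s‖ ≤ M) (h2 : ‖c - Complex.I*s‖ ≤ M) :
    Real.sqrt (‖c*a - s*b‖^2 + ‖s*a + c*b‖^2) ≤ M * Real.sqrt (‖a‖^2 + ‖b‖^2) := by
  have e1 : (c*a - s*b) + Complex.I * (s*a + c*b) = (c + Complex.I*s) * (a + Complex.I*b) := by
    linear_combination (-(s*b)) * Complex.I_sq
  have e2 : (c*a - s*b) - Complex.I * (s*a + c*b) = (c - Complex.I*s) * (a - Complex.I*b) := by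
    linear_combination (-(s*b)) * Complex.I_sq
  have hle : ‖c*a - s*b‖^2 + ‖s*a + c*b‖^2 ≤ M^2 * (‖a‖^2 + ‖b‖^2) := by
    rw [key_id, e1, e2, key_id a b]
    have n1 : ‖(c + Complex.I*s) * (a + Complex.I*b)‖^2 ≤ M^2 * ‖a + Complex.I*b‖^2 := by
      rw [norm_mul, mul_pow]
      gcongr
    have n2 : ‖(c - Complex.I*s) * (a - Complex.I*b)‖^2 ≤ M^2 * ‖a - Complex.I*b‖^2 := by
      rw [norm_mul, mul_pow]
      gcongr
    calc (‖(c + Complex.I*s) * (a + Complex.I*b)‖^2 + ‖(c - Complex.I*s) * (a - Complex.I*b)‖^2)/2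
        ≤ (M^2 * ‖a + Complex.I*b‖^2 + M^2 * ‖a - Complex.I*b‖^2)/2 := by linarith
      _ = M^2 * ((‖a + Complex.I*b‖^2 + ‖a - Complex.I*b‖^2)/2) := by ring
  calc Real.sqrt (‖c*a - s*b‖^2 + ‖s*a + c*b‖^2) ≤ Real.sqrt (M^2 * (‖a‖^2 + ‖b‖^2)) :=
        Real.sqrt_le_sqrt hle
    _ = M * Real.sqrt (‖a‖^2 + ‖b‖^2) := by
        rw [Real.sqrt_mul (sq_nonneg M), Real.sqrt_sq hM]

lemma opNorm_U0_le (lam : ℂ) (t : ℝ) :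
    opNorm (U0 lam t) ≤ Real.exp (|lam.im| * |t|) := by
  set M := Real.exp (|lam.im| * |t|) with hMdef
  have hM0 : (0:ℝ) ≤ M := (Real.exp_pos _).le
  unfold opNorm
  apply ContinuousLinearMap.opNorm_le_bound _ hM0
  intro v
  set c := Complex.cos (lam * t) with hc
  set s := Complex.sin (lam * t) with hs
  have hv : (Matrix.toEuclideanCLM (𝕜 := ℂ) (U0 lam t)) v =
      (WithLp.equiv 2 (Fin 2 → ℂ)).symm ((U0 lam t).mulVec (WithLp.equiv 2 (Fin 2 → ℂ) v)) := rfl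
  have h1 : ‖c + Complex.I * s‖ ≤ M := by
    have : c + Complex.I * s = Complex.exp (lam * t * Complex.I) := by
      rw [Complex.exp_mul_I]; ring
    rw [this, Complex.norm_exp, hMdef]
    apply Real.exp_le_exp.2
    have : (lam * ↑t * Complex.I).re = -(lam.im * t) := by simp
    rw [this]
    calc -(lam.im * t) ≤ |lam.im * t| := neg_le_abs _
      _ = |lam.im| * |t| := abs_mul _ _
  have h2 : ‖c - Complex.I * s‖ ≤ M := by
    have : c - Complex.I * s = Complex.exp (-(lam * t) * Complex.I) := by
      rw [Complex.exp_mul_I, Complex.cos_neg, Complex.sin_neg]; ring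
    rw [this, Complex.norm_exp, hMdef]
    apply Real.exp_le_exp.2
    have : (-(lam * ↑t) * Complex.I).re = lam.im * t := by simp
    rw [this]
    calc lam.im * t ≤ |lam.im * t| := le_abs_self _
      _ = |lam.im| * |t| := abs_mul _ _
  rw [hv]
  rw [EuclideanSpace.norm_eq, EuclideanSpace.norm_eq]
  simp only [WithLp.equiv_symm_apply, WithLp.ofLp_toLp, Fin.sum_univ_two]
  have hm0 : (U0 lam t).mulVec (WithLp.equiv 2 (Fin 2 → ℂ) v) 0 = c * v 0 - s * v 1 := by
    simp [U0, Matrix.mulVec, dotProduct, Fin.sum_univ_two, hc, hs, Matrix.vecHead, Matrix.vecTail]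
    ring
  have hm1 : (U0 lam t).mulVec (WithLp.equiv 2 (Fin 2 → ℂ) v) 1 = s * v 0 + c * v 1 := by
    simp [U0, Matrix.mulVec, dotProduct, Fin.sum_univ_two, hc, hs, Matrix.vecHead, Matrix.vecTail]
  rw [hm0, hm1]
  exact rot_ineq c s (v 0) (v 1) M hM0 h1 h2

lemma continuous_U0t (lam : ℂ) : Continuous fun t : ℝ => U0 lam t := by
  apply continuous_matrix
  intro i j
  fin_cases i <;> fin_cases j <;> simp [U0] <;> fun_prop

lemma continuous_KNt (K : ℝ → ℝ → M2) (N : ℕ) (x : ℝ) :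
    Continuous fun t => KN K N x t := by
  unfold KN
  apply continuous_finset_sum
  intro n _
  exact (continuous_const.mul ((legendreP n).continuous.comp
    (continuous_id.div_const x))).smul continuous_const


set_option maxHeartbeats 1000000 in
set_option synthInstance.maxHeartbeats 1000000 in
/-- `L²`-based uniform bounds for `U(λ,x) − U^N(λ,x)`. -/
theorem statement18 (b : ℝ) (hb : 0 < b) (p q : ℝ → ℂ)
    (hQ : IntegrableOn (diracPot p q) (Set.Icc 0 b))
    (K : ℝ → ℝ → M2)
    (hker : IsTransKernel b (diracPot p q) K)
    (hKint : ∀ y ∈ Set.Ioc 0 b, IntegrableOn (fun t => K y t) (Set.Icc (-y) y))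
    (N : ℕ) (x : ℝ) (hx : x ∈ Set.Ioc 0 b) (ε₂ : ℝ) (hε : 0 ≤ ε₂)
    (hbound : (∫⁻ t in Set.Ioc (-x) x,
        ENNReal.ofReal (opNorm (K x t - KN K N x t) ^ 2)) ≤ ENNReal.ofReal (ε₂ ^ 2)) :
    (∀ lam : ℝ, opNorm (Umat K (lam : ℂ) x - UmatN K N (lam : ℂ) x)
        ≤ Real.sqrt (2 * x) * ε₂) ∧
    (∀ lam : ℂ, lam.im ≠ 0 → opNorm (Umat K lam x - UmatN K N lam x)
        ≤ ε₂ * Real.sqrt ((Real.exp (2 * |lam.im| * x) - 1) / |lam.im|)) := by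
  obtain ⟨hx0, hxb⟩ := hx
  have hxx : (-x) ≤ x := by linarith
  set μ' := (volume : Measure ℝ).restrict (Set.Ioc (-x) x) with hμ'
  haveI : IsFiniteMeasure μ' := by
    constructor
    rw [hμ', Measure.restrict_apply_univ, Real.volume_Ioc]
    exact ENNReal.ofReal_lt_top
  set D : ℝ → M2 := fun t => K x t - KN K N x t with hD
  set g : ℝ → ℝ := fun t => opNorm (D t) with hgdef
  have hg0 : ∀ t, 0 ≤ g t := fun t => opNorm_nonneg _
  have hKx : IntegrableOn (fun t => K x t) (Set.Ioc (-x) x) :=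
    (hKint x ⟨hx0, hxb⟩).mono_set Set.Ioc_subset_Icc_self
  have hKNc := continuous_KNt K N x
  have hD_asm : AEStronglyMeasurable D μ' :=
    (hKx.sub (hKNc.integrableOn_Ioc (a := -x) (b := x))).aestronglyMeasurable
  have hg_asm : AEStronglyMeasurable g μ' := by
    have : g = (fun A : M2 => ‖LmapC A‖) ∘ D := rfl
    rw [this]
    exact (LmapC.continuous.norm).comp_aestronglyMeasurable hD_asm
  have hgsq_asm : AEStronglyMeasurable (fun t => g t ^ 2) μ' :=
    (hg_asm.aemeasurable.pow_const 2).aestronglyMeasurable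
  have hbound' : (∫⁻ t, ENNReal.ofReal (g t ^ 2) ∂μ') ≤ ENNReal.ofReal (ε₂ ^ 2) := hbound
  have hgsq_int : Integrable (fun t => g t ^ 2) μ' := by
    refine ⟨hgsq_asm, ?_⟩
    rw [hasFiniteIntegral_iff_norm]
    calc ∫⁻ t, ENNReal.ofReal ‖g t ^ 2‖ ∂μ' = ∫⁻ t, ENNReal.ofReal (g t ^ 2) ∂μ' :=
        lintegral_congr fun t => by rw [Real.norm_of_nonneg (sq_nonneg _)]
      _ ≤ ENNReal.ofReal (ε₂^2) := hbound'
      _ < ⊤ := ENNReal.ofReal_lt_top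
  have hg2 : MemLp g 2 μ' := (memLp_two_iff_integrable_sq hg_asm).2 hgsq_int
  have hgsq_le : ∫ t, g t ^ 2 ∂μ' ≤ ε₂ ^ 2 := by
    rw [integral_eq_lintegral_of_nonneg_ae (Eventually.of_forall fun t => sq_nonneg _) hgsq_asm]
    calc (∫⁻ t, ENNReal.ofReal (g t ^ 2) ∂μ').toReal ≤ (ENNReal.ofReal (ε₂ ^ 2)).toReal :=
        ENNReal.toReal_mono ENNReal.ofReal_ne_top hbound'
      _ = ε₂ ^ 2 := ENNReal.toReal_ofReal (sq_nonneg _)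
  have core : ∀ lam : ℂ, opNorm (Umat K lam x - UmatN K N lam x)
      ≤ ε₂ * Real.sqrt (∫ t, Real.exp (|lam.im| * |t|) ^ 2 ∂μ') := by
    intro lam
    set h : ℝ → ℝ := fun t => Real.exp (|lam.im| * |t|) with hhdef
    have hh0 : ∀ t, 0 ≤ h t := fun t => (Real.exp_pos _).le
    have hhc : Continuous h := by
      simp only [hhdef]
      fun_prop
    have hhbdd : ∀ᵐ t ∂μ', ‖h t‖ ≤ Real.exp (|lam.im| * x) := by
      filter_upwards [ae_restrict_mem measurableSet_Ioc] with t ht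
      rw [Real.norm_of_nonneg (hh0 t)]
      apply Real.exp_le_exp.2
      apply mul_le_mul_of_nonneg_left _ (abs_nonneg _)
      exact abs_le.2 ⟨by linarith [ht.1], ht.2⟩
    have hh2 : MemLp h 2 μ' := MemLp.of_bound hhc.aestronglyMeasurable _ hhbdd
    have hLK : Integrable (fun t => LmapC (K x t)) μ' := LmapC.integrable_comp hKx
    have hU0c := continuous_U0t lam
    have hKU0L : Integrable (fun t => LmapC (K x t) * LmapC (U0 lam t)) μ' := by
      refine Integrable.mono' (hLK.norm.mul_const (Real.exp (|lam.im| * x)))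
        (hLK.aestronglyMeasurable.mul
          ((LmapC.continuous.comp hU0c).aestronglyMeasurable)) ?_
      filter_upwards [ae_restrict_mem measurableSet_Ioc] with t ht
      calc ‖LmapC (K x t) * LmapC (U0 lam t)‖
          ≤ ‖LmapC (K x t)‖ * ‖LmapC (U0 lam t)‖ := norm_mul_le _ _
        _ ≤ ‖LmapC (K x t)‖ * Real.exp (|lam.im| * x) := by
            apply mul_le_mul_of_nonneg_left _ (norm_nonneg _)
            refine (opNorm_U0_le lam t).trans (Real.exp_le_exp.2 ?_)
            apply mul_le_mul_of_nonneg_left _ (abs_nonneg _)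
            exact abs_le.2 ⟨by linarith [ht.1], ht.2⟩
    have hKU0 : Integrable (fun t => K x t * U0 lam t) μ' := by
      have heq : (fun t => K x t * U0 lam t)
          = fun t => LinvC (LmapC (K x t) * LmapC (U0 lam t)) := by
        funext t; rw [← LmapC_mul, LinvC_LmapC]
      rw [heq]
      exact LinvC.integrable_comp hKU0L
    have hKNU0 : Integrable (fun t => KN K N x t * U0 lam t) μ' :=
      (hKNc.mul hU0c).integrableOn_Ioc
    have hDU0int : Integrable (fun t => D t * U0 lam t) μ' := by
      have heq : (fun t => D t * U0 lam t)
          = fun t => K x t * U0 lam t - KN K N x t * U0 lam t := by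
        funext t; exact sub_mul _ _ _
      rw [heq]
      exact hKU0.sub hKNU0
    have hdiff : Umat K lam x - UmatN K N lam x = ∫ t, D t * U0 lam t ∂μ' := by
      show (U0 lam x + ∫ t in (-x)..x, K x t * U0 lam t)
          - (U0 lam x + ∫ t in (-x)..x, KN K N x t * U0 lam t) = _
      rw [add_sub_add_left_eq_sub, intervalIntegral.integral_of_le hxx,
        intervalIntegral.integral_of_le hxx, ← hμ', ← integral_sub hKU0 hKNU0]
      exact integral_congr_ae (Eventually.of_forall fun t => (sub_mul _ _ _).symm)
    have hgh_int : Integrable (fun t => g t * h t) μ' := by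
      have := Integrable.bdd_mul (c := Real.exp (|lam.im| * x))
        (hg2.integrable one_le_two) hhc.aestronglyMeasurable hhbdd
      simpa [mul_comm] using this
    have hnorm : opNorm (Umat K lam x - UmatN K N lam x) ≤ ∫ t, g t * h t ∂μ' := by
      rw [hdiff, opNorm_eq, show LmapC (∫ t, D t * U0 lam t ∂μ') = ∫ t, LmapC (D t * U0 lam t) ∂μ' from
        (ContinuousLinearMap.integral_comp_comm LmapC hDU0int).symm]
      refine norm_integral_le_of_norm_le hgh_int (Eventually.of_forall fun t => ?_)
      rw [show LmapC (D t * U0 lam t) = LmapC (D t) * LmapC (U0 lam t) from LmapC_mul _ _]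
      calc ‖LmapC (D t) * LmapC (U0 lam t)‖
          ≤ ‖LmapC (D t)‖ * ‖LmapC (U0 lam t)‖ := norm_mul_le _ _
        _ ≤ g t * h t :=
            mul_le_mul_of_nonneg_left (opNorm_U0_le lam t) (norm_nonneg _)
    have hconj : Real.HolderConjugate 2 2 := Real.HolderConjugate.two_two
    have hg2' : MemLp g (ENNReal.ofReal 2) μ' := by
      rw [ENNReal.ofReal_ofNat]; exact hg2
    have hh2' : MemLp h (ENNReal.ofReal 2) μ' := by
      rw [ENNReal.ofReal_ofNat]; exact hh2
    have hHolder := integral_mul_le_Lp_mul_Lq_of_nonneg hconj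
      (Eventually.of_forall hg0) (Eventually.of_forall hh0) hg2' hh2'
    simp only [Real.rpow_two] at hHolder
    rw [← Real.sqrt_eq_rpow, ← Real.sqrt_eq_rpow] at hHolder
    have h1le : Real.sqrt (∫ t, g t ^ 2 ∂μ') ≤ ε₂ := by
      refine (Real.sqrt_le_sqrt hgsq_le).trans ?_
      rw [Real.sqrt_sq hε]
    calc opNorm (Umat K lam x - UmatN K N lam x) ≤ ∫ t, g t * h t ∂μ' := hnorm
      _ ≤ Real.sqrt (∫ t, g t ^ 2 ∂μ') * Real.sqrt (∫ t, h t ^ 2 ∂μ') := hHolder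
      _ ≤ ε₂ * Real.sqrt (∫ t, h t ^ 2 ∂μ') :=
          mul_le_mul_of_nonneg_right h1le (Real.sqrt_nonneg _)
  constructor
  · intro lam
    have hcore := core (lam : ℂ)
    simp only [Complex.ofReal_im, abs_zero, zero_mul, Real.exp_zero, one_pow] at hcore
    have hvol : ∫ t, (1:ℝ) ∂μ' = 2 * x := by
      rw [MeasureTheory.integral_const, smul_eq_mul, mul_one, hμ', measureReal_restrict_apply_univ,
        Real.volume_real_Ioc, max_eq_left (by linarith)]
      ring
    rw [hvol] at hcore
    rw [mul_comm]
    exact hcore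
  · intro lam him
    have hcore := core lam
    set β := |lam.im| with hβdef
    have hβ : 0 < β := abs_pos.2 him
    have hcont2 : Continuous fun t : ℝ => Real.exp (2*β*|t|) := by fun_prop
    have hsq : ∀ t:ℝ, Real.exp (β * |t|)^2 = Real.exp (2*β*|t|) := fun t => by
      rw [sq, ← Real.exp_add]; ring_nf
    have step0 : ∫ t, Real.exp (β*|t|)^2 ∂μ' = ∫ t in (-x)..x, Real.exp (2*β*|t|) := by
      rw [intervalIntegral.integral_of_le hxx, ← hμ']
      exact integral_congr_ae (Eventually.of_forall fun t => hsq t)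
    have hneg : ∫ t in (-x)..(0:ℝ), Real.exp (2*β*|t|)
        = ∫ t in (0:ℝ)..x, Real.exp (2*β*|t|) := by
      have := intervalIntegral.integral_comp_neg (a := 0) (b := x)
        (fun t => Real.exp (2*β*|t|))
      simp only [abs_neg, neg_zero] at this
      exact this.symm
    have hpos : ∫ t in (0:ℝ)..x, Real.exp (2*β*|t|) = (Real.exp (2*β*x) - 1)/(2*β) := by
      have hcongr : ∫ t in (0:ℝ)..x, Real.exp (2*β*|t|)
          = ∫ t in (0:ℝ)..x, Real.exp ((2*β)*t) := by
        apply intervalIntegral.integral_congr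
        intro t ht
        rw [Set.uIcc_of_le (le_of_lt hx0)] at ht
        show Real.exp (2*β*|t|) = Real.exp ((2*β)*t)
        rw [abs_of_nonneg ht.1]
      rw [hcongr, intervalIntegral.integral_comp_mul_left (fun u => Real.exp u)
        (by positivity : (2*β) ≠ 0), mul_zero, integral_exp, Real.exp_zero, smul_eq_mul]
      ring
    have hsplit : ∫ t in (-x)..x, Real.exp (2*β*|t|) = (Real.exp (2*β*x) - 1)/β := by
      rw [← intervalIntegral.integral_add_adjacent_intervals
        (hcont2.intervalIntegrable (-x) 0) (hcont2.intervalIntegrable 0 x),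
        hneg, hpos]
      field_simp
      ring
    rw [step0, hsplit] at hcore
    exact hcore


end
end
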